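/- arXiv:1708.08290 — 6 statements merged into one kernel-verified Lean document; each statement's English description precedes it below -/
import Mathlib

section
/- Let f(X) ∈ ℤ[X] be a polynomial of degree n ≥ 1 with positive leading coefficient. There exist infinitely many primes p with the following property: there exists an infinite strictly increasing sequence of positive integers x_1 < x_2 < ... and a constant c > 0 depending only on f and p such that f(x_k) ≠ 0 and [f(x_k)]_{{p}} ≥ c·|f(x_k)|^{1/n} for all sufficiently large k. -/
open Polynomial

lemma aux_schur (g : Polynomial ℤ) (hg : 1 ≤ g.natDegree) :
    {p : ℕ | p.Prime ∧ ∃ a : ℤ, (p : ℤ) ∣ g.eval a}.Infinite := by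
  by_cases hc : g.coeff 0 = 0
  · apply Set.infinite_of_injective_forall_mem (f := fun n : ℕ => (n.nth Nat.Prime))
    · exact Nat.nth_injective Nat.infinite_setOf_prime
    · intro n
      refine ⟨Nat.prime_nth_prime n, 0, ?_⟩
      rw [← coeff_zero_eq_eval_zero, hc]
      exact dvd_zero _
  · apply Set.infinite_of_not_bddAbove
    rintro ⟨N, hN⟩
    set c : ℤ := g.coeff 0 with hcdef
    set F : ℤ := (N.factorial : ℤ) with hFdef
    have hF0 : F ≠ 0 := Int.natCast_ne_zero.mpr N.factorial_ne_zero
    set h : Polynomial ℤ := g.divX with hhdef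
    have hgy : ∀ y : ℤ, g.eval y = y * h.eval y + c := by
      intro y
      conv_lhs => rw [← X_mul_divX_add g]
      simp [hhdef, hcdef]
    set w : ℤ → ℤ := fun t => F * (t * h.eval (c * F * t)) + 1 with hwdef
    have hwg : ∀ t : ℤ, g.eval (c * F * t) = c * w t := by
      intro t
      rw [hgy]; ring
    -- find t with (w t).natAbs ≠ 1
    have hex : ∃ t : ℤ, (w t).natAbs ≠ 1 := by
      by_contra hcon
      push_neg at hcon
      have hmem : ∀ t : ℤ, g.eval (c * F * t) = -c ∨ g.eval (c * F * t) = c := by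
        intro t
        have h1 : w t = 1 ∨ w t = -1 := by
          have := hcon t
          rcases Int.natAbs_eq (w t) with h2 | h2 <;> rw [this] at h2 <;> [left; right] <;>
            exact_mod_cast h2
        rcases h1 with h1 | h1
        · right; rw [hwg, h1, mul_one]
        · left; rw [hwg, h1]; ring
      have hgne : g ≠ 0 := fun h0 => by simp [h0] at hg
      have hne1 : g + C c ≠ 0 := by
        intro h0
        have : g = -C c := by linear_combination h0
        rw [this] at hg; simp at hg
      have hne2 : g - C c ≠ 0 := by
        intro h0
        have : g = C c := by linear_combination h0
        rw [this] at hg; simp at hg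
      have hfin1 : {y : ℤ | g.eval y = -c}.Finite := by
        have : {y : ℤ | g.eval y = -c} ⊆ {y : ℤ | (g + C c).IsRoot y} := by
          intro y hy; simp only [Set.mem_setOf_eq, IsRoot, eval_add, eval_C] at hy ⊢; omega
        exact (Polynomial.finite_setOf_isRoot hne1).subset this
      have hfin2 : {y : ℤ | g.eval y = c}.Finite := by
        have : {y : ℤ | g.eval y = c} ⊆ {y : ℤ | (g - C c).IsRoot y} := by
          intro y hy; simp only [Set.mem_setOf_eq, IsRoot, eval_sub, eval_C] at hy ⊢; omega
        exact (Polynomial.finite_setOf_isRoot hne2).subset this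
      have hfin : ({y : ℤ | g.eval y = -c} ∪ {y : ℤ | g.eval y = c}).Finite := hfin1.union hfin2
      have hinj : Function.Injective (fun t : ℤ => c * F * t) := fun a b hab => by
        have hcF : c * F ≠ 0 := mul_ne_zero hc hF0
        exact mul_left_cancel₀ hcF hab
      have hpre : ((fun t : ℤ => c * F * t) ⁻¹' ({y : ℤ | g.eval y = -c} ∪ {y : ℤ | g.eval y = c})).Finite :=
        Set.Finite.preimage hinj.injOn hfin
      have huniv : ((fun t : ℤ => c * F * t) ⁻¹' ({y : ℤ | g.eval y = -c} ∪ {y : ℤ | g.eval y = c})) = Set.univ := by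
        apply Set.eq_univ_of_forall
        intro t
        rcases hmem t with h1 | h1
        · exact Or.inl h1
        · exact Or.inr h1
      rw [huniv] at hpre
      exact Set.infinite_univ hpre
    obtain ⟨t, ht⟩ := hex
    obtain ⟨q, hq, hqd⟩ := Int.exists_prime_and_dvd ht
    set p : ℕ := q.natAbs with hpdef
    have hpp : p.Prime := Int.prime_iff_natAbs_prime.mp hq
    have hpdvd : (p : ℤ) ∣ w t := (Int.natAbs_dvd).mpr hqd
    have hmem : p ∈ {p : ℕ | p.Prime ∧ ∃ a : ℤ, (p : ℤ) ∣ g.eval a} := by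
      exact ⟨hpp, c * F * t, by rw [hwg]; exact Dvd.dvd.mul_left hpdvd c⟩
    have hple : p ≤ N := hN hmem
    have hdF : (p : ℤ) ∣ F := by
      rw [hFdef]; exact Int.natCast_dvd_natCast.mpr (Nat.dvd_factorial hpp.pos hple)
    have : (p : ℤ) ∣ 1 := by
      have h2 : (p : ℤ) ∣ F * (t * h.eval (c * F * t)) := hdF.mul_right _
      have := dvd_sub hpdvd h2
      simpa [hwdef] using this
    have := Int.le_of_dvd one_pos this
    exact absurd hpp.two_le (by omega)

lemma aux_hensel (g : Polynomial ℤ) {p : ℕ} (hp : p.Prime) (a₀ : ℤ)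
    (h0 : (p : ℤ) ∣ g.eval a₀) (hd : ¬ (p : ℤ) ∣ g.derivative.eval a₀) :
    ∀ k : ℕ, ∃ b : ℤ, (p : ℤ) ∣ (b - a₀) ∧ ((p : ℤ)) ^ k ∣ g.eval b := by
  intro k
  induction k with
  | zero => exact ⟨a₀, by simp, by simp⟩
  | succ k ih =>
    rcases Nat.eq_zero_or_pos k with hk | hk
    · subst hk; exact ⟨a₀, by simp, by simpa using h0⟩
    obtain ⟨b, hb1, hb2⟩ := ih
    have hdb : ¬ (p : ℤ) ∣ g.derivative.eval b := by
      intro hdvd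
      have hsub : (b - a₀) ∣ (g.derivative.eval b - g.derivative.eval a₀) :=
        Polynomial.sub_dvd_eval_sub _ _ _
      have h2 : (p : ℤ) ∣ g.derivative.eval b - g.derivative.eval a₀ := hb1.trans hsub
      exact hd (by simpa using dvd_sub hdvd h2)
    obtain ⟨m, hm⟩ := hb2
    haveI : Fact p.Prime := ⟨hp⟩
    set db : ℤ := g.derivative.eval b with hdbdef
    have hdbz : ((db : ZMod p)) ≠ 0 := fun h => hdb ((ZMod.intCast_zmod_eq_zero_iff_dvd _ _).mp h)
    set u : ZMod p := (-(m : ZMod p)) * ((db : ZMod p))⁻¹ with hudef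
    set t : ℤ := (u.val : ℤ) with htdef
    have ht : (p : ℤ) ∣ m + db * t := by
      rw [← ZMod.intCast_zmod_eq_zero_iff_dvd]
      push_cast
      have htu : ((u.val : ℤ) : ZMod p) = u := by
        push_cast
        exact ZMod.natCast_rightInverse u
      rw [htdef, htu, hudef]
      rw [mul_comm ((db : ZMod p)) _, mul_assoc, inv_mul_cancel₀ hdbz]
      ring
    obtain ⟨s, hs⟩ := ht
    obtain ⟨K, hK⟩ := g.binomExpansion b ((p : ℤ) ^ k * t)
    refine ⟨b + (p : ℤ) ^ k * t, ?_, ?_⟩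
    · have h1 : (p : ℤ) ∣ (p : ℤ) ^ k * t :=
        dvd_mul_of_dvd_left (dvd_pow_self _ hk.ne') t
      have := dvd_add hb1 h1
      have heq : b - a₀ + (p : ℤ) ^ k * t = b + (p : ℤ) ^ k * t - a₀ := by ring
      rwa [heq] at this
    · rw [hK, hm]
      have h1 : (p : ℤ) ^ (k + 1) ∣ (p : ℤ) ^ k * m + db * ((p : ℤ) ^ k * t) := by
        have heq : (p : ℤ) ^ k * m + db * ((p : ℤ) ^ k * t) = (p : ℤ) ^ k * (m + db * t) := by
          ring
        rw [heq, hs]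
        exact ⟨s, by ring⟩
      have h2 : (p : ℤ) ^ (k + 1) ∣ K * ((p : ℤ) ^ k * t) ^ 2 := by
        have hdd : (p : ℤ) ^ (k + 1) ∣ (p : ℤ) ^ (2 * k) := pow_dvd_pow _ (by omega)
        refine hdd.trans ⟨K * t ^ 2, by ring⟩
      exact dvd_add h1 h2

lemma aux_factor (f : Polynomial ℤ) (hdeg : 1 ≤ f.natDegree) (hf0 : f ≠ 0) :
    ∃ (g u v : Polynomial ℤ) (r : ℤ), g ∣ f ∧ 1 ≤ g.natDegree ∧ r ≠ 0 ∧
      u * g + v * g.derivative = C r := by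
  have hfpdeg : f.primPart.natDegree = f.natDegree := f.natDegree_primPart
  have hfpne : f.primPart ≠ 0 := f.primPart_ne_zero
  have hfpnu : ¬ IsUnit f.primPart := by
    intro h
    have := natDegree_eq_zero_of_isUnit h
    omega
  obtain ⟨g, hgirr, hgdvd⟩ := WfDvdMonoid.exists_irreducible_factor hfpnu hfpne
  have hgdvdf : g ∣ f := hgdvd.trans f.primPart_dvd
  have hgdeg : 1 ≤ g.natDegree := by
    by_contra hcon
    have h0 : g.natDegree = 0 := by omega
    obtain ⟨x, hx⟩ := natDegree_eq_zero.mp h0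
    have : IsUnit x := (f.isPrimitive_primPart) x (hx ▸ hgdvd)
    exact hgirr.not_isUnit (hx ▸ (isUnit_C.mpr this))
  have hgprim : g.IsPrimitive := by
    intro a ha
    obtain ⟨w, hw⟩ := ha
    rcases hgirr.isUnit_or_isUnit hw with h | h
    · exact isUnit_C.mp h
    · exfalso
      have hw0 : w.natDegree = 0 := natDegree_eq_zero_of_isUnit h
      have : g.natDegree ≤ (C a).natDegree + w.natDegree := hw ▸ natDegree_mul_le
      simp [hw0] at this
      omega
  have hGirr : Irreducible (g.map (Int.castRingHom ℚ)) :=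
    (IsPrimitive.Int.irreducible_iff_irreducible_map_cast hgprim).mp hgirr
  have hsep : (g.map (Int.castRingHom ℚ)).Separable := hGirr.separable
  obtain ⟨U, V, hUV⟩ := hsep
  rw [derivative_map] at hUV
  obtain ⟨b, hb⟩ := IsLocalization.integerNormalization_map_to_map (nonZeroDivisors ℤ) U
  obtain ⟨b', hb'⟩ := IsLocalization.integerNormalization_map_to_map (nonZeroDivisors ℤ) V
  set u₀ := IsLocalization.integerNormalization (nonZeroDivisors ℤ) U with hu₀
  set v₀ := IsLocalization.integerNormalization (nonZeroDivisors ℤ) V with hv₀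
  rw [algebraMap_int_eq] at hb hb'
  refine ⟨g, C (b' : ℤ) * u₀, C (b : ℤ) * v₀, (b : ℤ) * (b' : ℤ), hgdvdf, hgdeg, ?_, ?_⟩
  · exact mul_ne_zero (nonZeroDivisors.coe_ne_zero b) (nonZeroDivisors.coe_ne_zero b')
  · apply Polynomial.map_injective (Int.castRingHom ℚ) Int.cast_injective
    rw [Polynomial.map_add, Polynomial.map_mul, Polynomial.map_mul, Polynomial.map_mul,
      Polynomial.map_mul, hb, hb', map_C, map_C, map_C]
    simp only [Int.coe_castRingHom, zsmul_eq_mul, derivative_map, C_mul, C_eq_intCast]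
    push_cast
    linear_combination (((b : ℤ) : ℚ[X])) * (((b' : ℤ) : ℚ[X])) * hUV

lemma aux_bound (f : Polynomial ℤ) {x : ℤ} (hx : 1 ≤ x) :
    |f.eval x| ≤ (∑ i ∈ Finset.range (f.natDegree + 1), |f.coeff i|) * x ^ f.natDegree := by
  rw [eval_eq_sum_range]
  refine (Finset.abs_sum_le_sum_abs _ _).trans ?_
  rw [Finset.sum_mul]
  apply Finset.sum_le_sum
  intro i hi
  rw [abs_mul, abs_pow, abs_of_nonneg (by linarith : (0:ℤ) ≤ x)]
  exact mul_le_mul_of_nonneg_left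
    (pow_le_pow_right₀ hx (Nat.le_of_lt_succ (Finset.mem_range.mp hi))) (abs_nonneg _)



/-- for `f ∈ ℤ[X]` of degree `n ≥ 1` with positive leading coefficient there
are infinitely many primes `p` admitting a strictly increasing sequence of positive
integers `x₁ < x₂ < ⋯` and a constant `c > 0` with `f(x_k) ≠ 0` and
`[f(x_k)]_{{p}} ≥ c·|f(x_k)|^{1/n}` for all sufficiently large `k`. -/
theorem infinitely_many_primes_with_large_p_part (f : Polynomial ℤ)
    (hdeg : 1 ≤ f.natDegree) (hlc : 0 < f.leadingCoeff) :
    {p : ℕ | p.Prime ∧ ∃ x : ℕ → ℕ, StrictMono x ∧ (∀ k, 0 < x k) ∧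
      ∃ c : ℝ, 0 < c ∧ ∃ K : ℕ, ∀ k ≥ K,
        f.eval (x k : ℤ) ≠ 0 ∧
        c * |(Int.cast (f.eval (x k : ℤ)) : ℝ)| ^ (1 / (f.natDegree : ℝ)) ≤
          ((p ^ ((f.eval (x k : ℤ)).natAbs.factorization p) : ℕ) : ℝ)}.Infinite := by
  classical
  have hf0 : f ≠ 0 := fun h => by simp [h] at hlc
  obtain ⟨g, u, v, r, hgdvd, hgdeg, hr0, hbez⟩ := aux_factor f hdeg hf0
  set n := f.natDegree with hn
  -- the constant C
  set C : ℤ := ∑ i ∈ Finset.range (n + 1), |f.coeff i| with hC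
  have hC1 : 1 ≤ C := by
    have hmem : n ∈ Finset.range (n + 1) := Finset.self_mem_range_succ n
    have h1 : 1 ≤ |f.coeff n| := by
      have : f.coeff n = f.leadingCoeff := rfl
      rw [this, abs_of_pos hlc]
      omega
    calc (1 : ℤ) ≤ |f.coeff n| := h1
      _ ≤ C := Finset.single_le_sum (fun i _ => abs_nonneg (f.coeff i)) hmem
  -- bound on roots
  obtain ⟨B, hB⟩ := (Set.Finite.image Int.natAbs (finite_setOf_isRoot hf0)).bddAbove
  -- infinite set of good primes
  have hT := aux_schur g hgdeg
  set Bad : Set ℕ := {p : ℕ | p.Prime ∧ (p : ℤ) ∣ r} with hBadDef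
  have hBadfin : Bad.Finite := by
    apply Set.Finite.subset (Set.finite_le_nat r.natAbs)
    rintro p ⟨hpp, hpd⟩
    have h1 : (p : ℤ) ∣ (r.natAbs : ℤ) := (Int.dvd_natAbs).mpr hpd
    exact Nat.le_of_dvd (Int.natAbs_pos.mpr hr0) (Int.natCast_dvd_natCast.mp h1)
  refine Set.Infinite.mono ?_ (hT.diff hBadfin)
  rintro p ⟨⟨hpp, a₀, ha₀⟩, hpbad⟩
  have hpr : ¬ (p : ℤ) ∣ r := fun hd => hpbad ⟨hpp, hd⟩
  have hp2 : 2 ≤ p := hpp.two_le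
  have hpz : (0 : ℤ) < (p : ℤ) := by exact_mod_cast hpp.pos
  have hder : ¬ (p : ℤ) ∣ g.derivative.eval a₀ := by
    intro hd
    apply hpr
    have heq : u.eval a₀ * g.eval a₀ + v.eval a₀ * g.derivative.eval a₀ = r := by
      have := congrArg (eval a₀) hbez
      simpa using this
    rw [← heq]
    exact dvd_add (Dvd.dvd.mul_left ha₀ _) (Dvd.dvd.mul_left hd _)
  choose b hb1 hb2 using aux_hensel g hpp a₀ ha₀ hder
  -- the sequence
  set x : ℕ → ℕ := fun k => (b k % (p : ℤ) ^ k).toNat + p ^ k with hxdef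
  have hpkpos : ∀ k : ℕ, (0 : ℤ) < (p : ℤ) ^ k := fun k => pow_pos hpz k
  have hmod_nonneg : ∀ k, 0 ≤ b k % (p : ℤ) ^ k := fun k =>
    Int.emod_nonneg _ (hpkpos k).ne'
  have hmod_lt : ∀ k, b k % (p : ℤ) ^ k < (p : ℤ) ^ k := fun k =>
    Int.emod_lt_of_pos _ (hpkpos k)
  have hxval : ∀ k, (x k : ℤ) = b k % (p : ℤ) ^ k + (p : ℤ) ^ k := by
    intro k
    rw [hxdef]
    push_cast
    rw [Int.toNat_of_nonneg (hmod_nonneg k)]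
  have hxlb : ∀ k, p ^ k ≤ x k := fun k => Nat.le_add_left _ _
  have hxub : ∀ k, (x k : ℤ) < 2 * (p : ℤ) ^ k := by
    intro k
    rw [hxval k]
    linarith [hmod_lt k]
  have hxpos : ∀ k, 0 < x k := fun k => lt_of_lt_of_le (Nat.pow_pos (n := k) (by omega)) (hxlb k)
  have hmono : StrictMono x := by
    apply strictMono_nat_of_lt_succ
    intro k
    have h1 : (x k : ℤ) < 2 * (p : ℤ) ^ k := hxub k
    have h2 : 2 * (p : ℤ) ^ k ≤ (p : ℤ) ^ (k + 1) := by
      rw [pow_succ, mul_comm]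
      apply mul_le_mul_of_nonneg_left _ (hpkpos k).le
      exact_mod_cast hp2
    have h3 : (p : ℤ) ^ (k + 1) ≤ (x (k + 1) : ℤ) := by
      exact_mod_cast Nat.cast_le.mpr (hxlb (k + 1))
    have : (x k : ℤ) < (x (k + 1) : ℤ) := by linarith
    exact_mod_cast this
  -- divisibility
  have hdvdf : ∀ k, (p : ℤ) ^ k ∣ f.eval (x k : ℤ) := by
    intro k
    have h1 : (p : ℤ) ^ k ∣ (x k : ℤ) - b k := by
      rw [hxval k, Int.emod_def]
      exact ⟨1 - b k / (p : ℤ) ^ k, by ring⟩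
    have h2 : (p : ℤ) ^ k ∣ g.eval (x k : ℤ) - g.eval (b k) :=
      h1.trans (Polynomial.sub_dvd_eval_sub _ _ _)
    have h3 : (p : ℤ) ^ k ∣ g.eval (x k : ℤ) := by
      have := dvd_add h2 (hb2 k)
      simpa using this
    obtain ⟨w, hw⟩ := hgdvd
    rw [hw, eval_mul]
    exact h3.mul_right _
  -- constants
  have hCpos : (0 : ℝ) < (C : ℝ) := by exact_mod_cast lt_of_lt_of_le one_pos hC1
  have hnne : (n : ℝ) ≠ 0 := by
    have : 0 < n := hdeg
    positivity
  have hCrpos : (0 : ℝ) < (C : ℝ) ^ (1 / (n : ℝ)) := Real.rpow_pos_of_pos hCpos _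
  refine ⟨hpp, x, hmono, hxpos, (2 * (C : ℝ) ^ (1 / (n : ℝ)))⁻¹, by positivity, B + 1, ?_⟩
  intro k hk
  -- x k is large
  have hxbig : B < x k := by
    have h1 : k < 2 ^ k := Nat.lt_two_pow_self
    have h2 : 2 ^ k ≤ p ^ k := Nat.pow_le_pow_left hp2 k
    have := hxlb k
    omega
  have hfne : f.eval (x k : ℤ) ≠ 0 := by
    intro h0
    have hroot : ((x k : ℤ)) ∈ {y : ℤ | f.IsRoot y} := h0
    have hmem : ((x k : ℤ)).natAbs ∈ Int.natAbs '' {y : ℤ | f.IsRoot y} :=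
      ⟨_, hroot, rfl⟩
    have := hB hmem
    simp only [Int.natAbs_natCast] at this
    omega
  refine ⟨hfne, ?_⟩
  -- factorization bound
  have hvk : k ≤ (f.eval (x k : ℤ)).natAbs.factorization p := by
    rw [← Nat.Prime.pow_dvd_iff_le_factorization hpp (Int.natAbs_ne_zero.mpr hfne)]
    have h1 : ((p ^ k : ℕ) : ℤ) ∣ (f.eval (x k : ℤ)) := by
      push_cast
      exact hdvdf k
    exact Int.natCast_dvd_natCast.mp ((Int.dvd_natAbs).mpr h1)
  -- real estimates
  set v := (f.eval (x k : ℤ)).natAbs.factorization p with hv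
  have hstep1 : ((p : ℝ)) ^ k ≤ ((p ^ v : ℕ) : ℝ) := by
    have : p ^ k ≤ p ^ v := Nat.pow_le_pow_right hpp.pos hvk
    exact_mod_cast this
  have habs : |((f.eval (x k : ℤ) : ℤ) : ℝ)| ≤ (C : ℝ) * (2 * (p : ℝ) ^ k) ^ n := by
    have h1 : |f.eval (x k : ℤ)| ≤ C * (x k : ℤ) ^ n := by
      have hx1 : (1 : ℤ) ≤ (x k : ℤ) := by exact_mod_cast hxpos k
      exact aux_bound f hx1
    have h2 : C * (x k : ℤ) ^ n ≤ C * (2 * (p : ℤ) ^ k) ^ n := by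
      apply mul_le_mul_of_nonneg_left _ (by omega)
      apply pow_le_pow_left₀ (by positivity) (hxub k).le
    have := h1.trans h2
    calc |((f.eval (x k : ℤ) : ℤ) : ℝ)| = ((|f.eval (x k : ℤ)| : ℤ) : ℝ) := by
          push_cast; rfl
      _ ≤ (((C * (2 * (p : ℤ) ^ k) ^ n : ℤ)) : ℝ) := by exact_mod_cast this
      _ = (C : ℝ) * (2 * (p : ℝ) ^ k) ^ n := by push_cast; ring
  have hrpow : |((f.eval (x k : ℤ) : ℤ) : ℝ)| ^ (1 / (n : ℝ)) ≤
      (C : ℝ) ^ (1 / (n : ℝ)) * (2 * (p : ℝ) ^ k) := by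
    have h1 : |((f.eval (x k : ℤ) : ℤ) : ℝ)| ^ (1 / (n : ℝ)) ≤
        ((C : ℝ) * (2 * (p : ℝ) ^ k) ^ n) ^ (1 / (n : ℝ)) :=
      Real.rpow_le_rpow (abs_nonneg _) habs (by positivity)
    refine h1.trans_eq ?_
    rw [Real.mul_rpow hCpos.le (by positivity)]
    congr 1
    rw [← Real.rpow_natCast (2 * (p : ℝ) ^ k) n, ← Real.rpow_mul (by positivity)]
    rw [mul_one_div, div_self hnne, Real.rpow_one]
  calc (2 * (C : ℝ) ^ (1 / (n : ℝ)))⁻¹ * |((f.eval (x k : ℤ) : ℤ) : ℝ)| ^ (1 / (n : ℝ)) ≤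
        (2 * (C : ℝ) ^ (1 / (n : ℝ)))⁻¹ * ((C : ℝ) ^ (1 / (n : ℝ)) * (2 * (p : ℝ) ^ k)) := by
        apply mul_le_mul_of_nonneg_left hrpow (by positivity)
    _ = (p : ℝ) ^ k := by field_simp
    _ ≤ ((p ^ v : ℕ) : ℝ) := hstep1
end

section
/- Let Λ ⊆ ℤ² be a primitive lattice (i.e., Λ contains a point with coprime coordinates) of determinant d, and for a positive integer h let Λ_h := Λ ∩ hℤ². Then Λ_h is a lattice with determinant d·h²/gcd(h,d), and the shortest nonzero vector of Λ_h has Euclidean length at least h. -/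
/-- Change of basis of `ℤ²` given by a unimodular matrix with first column `(a, b)`. -/
def latticeBasisEquiv (a b u w : ℤ) (huw : u * a + w * b = 1) : (ℤ × ℤ) ≃+ (ℤ × ℤ) where
  toFun p := (p.1 * a - p.2 * w, p.1 * b + p.2 * u)
  invFun p := (u * p.1 + w * p.2, -b * p.1 + a * p.2)
  left_inv := by
    rintro ⟨x, y⟩
    simp only [Prod.mk.injEq]
    constructor
    · linear_combination x * huw
    · linear_combination y * huw
  right_inv := by
    rintro ⟨x, y⟩
    simp only [Prod.mk.injEq]
    constructor
    · linear_combination x * huw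
    · linear_combination y * huw
  map_add' := by
    rintro ⟨x, y⟩ ⟨x', y'⟩
    simp only [Prod.mk.injEq, Prod.mk_add_mk]
    constructor <;> ring

/-- There is a change of basis of `ℤ²` sending `(1,0)` to a given primitive vector `v`
and preserving `hℤ × hℤ`. -/
theorem exists_latticeBasisEquiv (v : ℤ × ℤ) (u w : ℤ) (huw : u * v.1 + w * v.2 = 1) (h : ℕ) :
    ∃ e : (ℤ × ℤ) ≃+ (ℤ × ℤ), e (1, 0) = v ∧
      ((AddSubgroup.zmultiples (h : ℤ)).prod (AddSubgroup.zmultiples (h : ℤ))).comap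
          e.toAddMonoidHom =
        (AddSubgroup.zmultiples (h : ℤ)).prod (AddSubgroup.zmultiples (h : ℤ)) := by
  refine ⟨latticeBasisEquiv v.1 v.2 u w huw, by simp [latticeBasisEquiv], ?_⟩
  ext ⟨x, y⟩
  simp only [AddSubgroup.mem_comap, AddSubgroup.mem_prod, Int.mem_zmultiples_iff,
    AddEquiv.coe_toAddMonoidHom, latticeBasisEquiv, AddEquiv.coe_mk, Equiv.coe_fn_mk]
  constructor
  · rintro ⟨h1, h2⟩
    constructor
    · have := dvd_add (h1.mul_left u) (h2.mul_left w)
      rwa [show u * (x * v.1 - y * w) + w * (x * v.2 + y * u) = x by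
        linear_combination x * huw] at this
    · have := dvd_add (h1.mul_left (-v.2)) (h2.mul_left v.1)
      rwa [show -v.2 * (x * v.1 - y * w) + v.1 * (x * v.2 + y * u) = y by
        linear_combination y * huw] at this
  · rintro ⟨h1, h2⟩
    exact ⟨dvd_sub (h1.mul_right v.1) (h2.mul_right w),
      dvd_add (h1.mul_right v.2) (h2.mul_right u)⟩

/-- A subgroup of `ℤ²` containing `(1,0)` is `ℤ × aℤ` for some `a`. -/
theorem eq_prod_of_mem (Λ : AddSubgroup (ℤ × ℤ)) (h10 : ((1 : ℤ), (0 : ℤ)) ∈ Λ) :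
    ∃ a : ℤ, Λ = (⊤ : AddSubgroup ℤ).prod (AddSubgroup.zmultiples a) := by
  obtain ⟨a, ha⟩ := Int.subgroup_cyclic (Λ.map (AddMonoidHom.snd ℤ ℤ))
  rw [← AddSubgroup.zmultiples_eq_closure] at ha
  refine ⟨a, ?_⟩
  ext ⟨x, y⟩
  simp only [AddSubgroup.mem_prod, AddSubgroup.mem_top, true_and, ← ha, AddSubgroup.mem_map]
  constructor
  · intro hxy
    exact ⟨(x, y), hxy, rfl⟩
  · rintro ⟨⟨x', y'⟩, hmem, rfl⟩
    have hsm : ((x - x') • ((1 : ℤ), (0 : ℤ)) : ℤ × ℤ) ∈ Λ := zsmul_mem h10 _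
    have := add_mem hsm hmem
    simpa using this


/-- for a primitive lattice `Λ ⊆ ℤ²` of determinant (index) `d` and a
positive integer `h`, the lattice `Λ_h = Λ ∩ hℤ²` has determinant `d·h²/gcd(h,d)` and its
shortest nonzero vector has Euclidean length at least `h`. -/
theorem primitive_lattice_inter_scaled (Λ : AddSubgroup (ℤ × ℤ)) (d : ℕ)
    (hd : Λ.index = d) (hd0 : 0 < d)
    (hprim : ∃ v ∈ Λ, IsCoprime v.1 v.2) (h : ℕ) (hh : 0 < h) :
    (Λ ⊓ (AddSubgroup.zmultiples (h : ℤ)).prod (AddSubgroup.zmultiples (h : ℤ))).index =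
        d * h ^ 2 / Nat.gcd h d ∧
      ∀ v ∈ Λ ⊓ (AddSubgroup.zmultiples (h : ℤ)).prod (AddSubgroup.zmultiples (h : ℤ)),
        v ≠ 0 → (h : ℤ) ^ 2 ≤ v.1 ^ 2 + v.2 ^ 2 := by
  constructor
  · -- index computation
    obtain ⟨v, hvΛ, u, w, huw⟩ := hprim
    obtain ⟨e, he1, heH⟩ := exists_latticeBasisEquiv v u w huw h
    have hidx : (Λ ⊓ (AddSubgroup.zmultiples (h : ℤ)).prod
          (AddSubgroup.zmultiples (h : ℤ))).index =
        (Λ.comap e.toAddMonoidHom ⊓ (AddSubgroup.zmultiples (h : ℤ)).prod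
          (AddSubgroup.zmultiples (h : ℤ))).index := by
      calc (Λ ⊓ (AddSubgroup.zmultiples (h : ℤ)).prod (AddSubgroup.zmultiples (h : ℤ))).index
          = ((Λ ⊓ (AddSubgroup.zmultiples (h : ℤ)).prod
              (AddSubgroup.zmultiples (h : ℤ))).comap e.toAddMonoidHom).index :=
            (AddSubgroup.index_comap_of_surjective _ e.surjective).symm
        _ = (Λ.comap e.toAddMonoidHom ⊓ ((AddSubgroup.zmultiples (h : ℤ)).prod
              (AddSubgroup.zmultiples (h : ℤ))).comap e.toAddMonoidHom).index := by
            rw [AddSubgroup.comap_inf]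
        _ = _ := by rw [heH]
    have h10 : ((1 : ℤ), (0 : ℤ)) ∈ Λ.comap e.toAddMonoidHom := by
      simpa [he1] using hvΛ
    have hΛ'idx : (Λ.comap e.toAddMonoidHom).index = d := by
      rw [AddSubgroup.index_comap_of_surjective _ e.surjective, hd]
    obtain ⟨a, ha⟩ := eq_prod_of_mem _ h10
    have hna : a.natAbs = d := by
      rw [ha, AddSubgroup.index_prod, AddSubgroup.index_top, one_mul,
        Int.index_zmultiples] at hΛ'idx
      exact hΛ'idx
    have had : AddSubgroup.zmultiples a = AddSubgroup.zmultiples ((d : ℕ) : ℤ) := by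
      rw [← Int.zmultiples_natAbs, hna]
    -- compute the intersection
    have hinf : Λ.comap e.toAddMonoidHom ⊓ (AddSubgroup.zmultiples (h : ℤ)).prod
          (AddSubgroup.zmultiples (h : ℤ)) =
        (AddSubgroup.zmultiples (h : ℤ)).prod
          (AddSubgroup.zmultiples ((Nat.lcm d h : ℕ) : ℤ)) := by
      ext ⟨x, y⟩
      simp only [AddSubgroup.mem_inf, ha, had, AddSubgroup.mem_prod, AddSubgroup.mem_top,
        true_and, Int.mem_zmultiples_iff]
      constructor
      · rintro ⟨hdy, hx, hy⟩
        refine ⟨hx, ?_⟩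
        have : (Int.lcm (d : ℤ) (h : ℤ) : ℤ) ∣ y :=
          Int.dvd_natAbs.mp (Int.natCast_dvd_natCast.mpr
            (Int.lcm_dvd (Int.dvd_natAbs.mpr hdy) (Int.dvd_natAbs.mpr hy)))
        simpa [Int.lcm] using this
      · rintro ⟨hx, hy⟩
        have h1 : ((d : ℕ) : ℤ) ∣ y := dvd_trans (by
          simpa [Int.lcm] using (Int.dvd_lcm_left (a := (d : ℤ)) (b := (h : ℤ)))) hy
        have h2 : ((h : ℕ) : ℤ) ∣ y := dvd_trans (by
          simpa [Int.lcm] using (Int.dvd_lcm_right (a := (d : ℤ)) (b := (h : ℤ)))) hy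
        exact ⟨h1, hx, h2⟩
    rw [hidx, hinf, AddSubgroup.index_prod, Int.index_zmultiples, Int.index_zmultiples,
      Int.natAbs_natCast, Int.natAbs_natCast]
    -- arithmetic: h * lcm d h = d * h^2 / gcd h d
    obtain ⟨d', hd'⟩ : Nat.gcd h d ∣ d := Nat.gcd_dvd_right h d
    have hg0 : 0 < Nat.gcd h d := Nat.gcd_pos_of_pos_left d hh
    have key1 : d * h = d' * h * Nat.gcd h d := by
      conv_lhs => rw [hd']
      ring
    have hlcm : Nat.lcm d h = d' * h := by
      rw [Nat.lcm, Nat.gcd_comm]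
      exact Nat.div_eq_of_eq_mul_left hg0 key1
    have key2 : d * h ^ 2 = h * (d' * h) * Nat.gcd h d := by
      conv_lhs => rw [hd']
      ring
    rw [hlcm]
    exact (Nat.div_eq_of_eq_mul_left hg0 key2).symm
  · rintro ⟨x, y⟩ hv hne
    obtain ⟨-, hmem⟩ := AddSubgroup.mem_inf.mp hv
    obtain ⟨hx, hy⟩ := AddSubgroup.mem_prod.mp hmem
    rw [Int.mem_zmultiples_iff] at hx hy
    obtain ⟨a, rfl⟩ := hx
    obtain ⟨b, rfl⟩ := hy
    dsimp only
    have hh' : (1 : ℤ) ≤ (h : ℤ) := by exact_mod_cast hh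
    rcases eq_or_ne a 0 with rfl | ha
    · have hb : b ≠ 0 := by
        rintro rfl
        simp at hne
      have : 1 ≤ b ^ 2 := by
        rcases lt_or_gt_of_ne hb with hb' | hb' <;> nlinarith
      nlinarith
    · have : 1 ≤ a ^ 2 := by
        rcases lt_or_gt_of_ne ha with ha' | ha' <;> nlinarith
      nlinarith
end

section
/- Let d be a positive integer. Then the sum over all positive integers h of μ(h)·gcd(d,h)/h² equals (6/π²)·∏_{p | d} (1 + p^{-1})^{-1}, where μ is the Möbius function and the product is over primes p dividing d. -/
open ArithmeticFunction Real

noncomputable def sqHom : ℕ →*₀ ℝ where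
  toFun n := ((n : ℝ)⁻¹) ^ 2
  map_zero' := by simp
  map_one' := by simp
  map_mul' m n := by push_cast; rw [mul_inv]; ring

lemma summable_sqHom : Summable (fun n : ℕ => ‖sqHom n‖) := by
  have h : Summable (fun n : ℕ => 1 / (n : ℝ) ^ 2) :=
    Real.summable_one_div_nat_pow.mpr one_lt_two
  refine h.congr fun n => ?_
  simp [sqHom, abs_of_nonneg, inv_pow, one_div]

/-- `∑_{h ≥ 1} μ(h)·gcd(d,h)/h² = (6/π²)·∏_{p ∣ d} (1 + p⁻¹)⁻¹`. -/
theorem moebius_gcd_series (d : ℕ) (hd : 0 < d) :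
    ∑' h : ℕ, ((ArithmeticFunction.moebius h : ℝ) * (Nat.gcd d h : ℝ) / (h : ℝ) ^ 2) =
      6 / Real.pi ^ 2 * ∏ p ∈ d.primeFactors, (1 + (p : ℝ)⁻¹)⁻¹ := by
  classical
  set F : ℕ → ℝ := fun h => (moebius h : ℝ) * (Nat.gcd d h : ℝ) / (h : ℝ) ^ 2 with hFdef
  have hf₁ : F 1 = 1 := by simp [hFdef]
  have hmul : ∀ {m n : ℕ}, Nat.Coprime m n → F (m * n) = F m * F n := by
    intro m n hmn
    simp only [hFdef]
    rw [isMultiplicative_moebius.map_mul_of_coprime hmn, Nat.Coprime.gcd_mul _ hmn]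
    push_cast
    ring
  have hF0 : F 0 = 0 := by simp [hFdef]
  -- summability
  have habs : ∀ n : ℕ, ‖F n‖ ≤ (d : ℝ) * ((n : ℝ)⁻¹) ^ 2 := by
    intro n
    rcases eq_or_ne n 0 with rfl | hn
    · simp [hF0]
    have h1 : |(moebius n : ℝ)| ≤ 1 := by
      have := abs_moebius_le_one (n := n)
      exact_mod_cast this
    have h2 : (Nat.gcd d n : ℝ) ≤ (d : ℝ) := by
      exact_mod_cast Nat.le_of_dvd hd (Nat.gcd_dvd_left d n)
    have h3 : (0 : ℝ) < (n : ℝ) ^ 2 := by positivity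
    rw [Real.norm_eq_abs, hFdef]
    rw [abs_div, abs_mul, abs_of_nonneg (by positivity : (0:ℝ) ≤ (Nat.gcd d n : ℝ)),
      abs_of_nonneg h3.le]
    rw [div_le_iff₀ h3, inv_pow]
    calc |(moebius n : ℝ)| * (Nat.gcd d n : ℝ) ≤ 1 * (d : ℝ) :=
          mul_le_mul h1 h2 (by positivity) zero_le_one
      _ = (d : ℝ) * (((n:ℝ) ^ 2)⁻¹ * (n:ℝ) ^ 2) := by
          rw [inv_mul_cancel₀ h3.ne']; ring
      _ = (d : ℝ) * ((n:ℝ) ^ 2)⁻¹ * (n:ℝ) ^ 2 := by ring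
  have hsum : Summable (fun n => ‖F n‖) := by
    refine Summable.of_nonneg_of_le (fun _ => norm_nonneg _) habs ?_
    have : Summable (fun n : ℕ => ((n : ℝ)⁻¹) ^ 2) := by
      refine summable_sqHom.congr fun n => ?_
      simp [sqHom, abs_of_nonneg]
    exact this.mul_left _
  -- Euler product for F
  have hP := EulerProduct.eulerProduct_hasProd hf₁ hmul hsum hF0
  -- local factors
  have hloc : ∀ p : Nat.Primes, (∑' e : ℕ, F ((p : ℕ) ^ e))
      = 1 - (Nat.gcd d (p : ℕ) : ℝ) / ((p : ℕ) : ℝ) ^ 2 := by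
    rintro ⟨p, hp⟩
    rw [tsum_eq_sum (s := ({0, 1} : Finset ℕ)) ?_]
    · rw [Finset.sum_insert (by norm_num), Finset.sum_singleton]
      simp only [pow_zero, pow_one, hf₁]
      rw [hFdef]
      simp only [moebius_apply_prime hp]
      push_cast
      ring
    · intro e he
      simp only [Finset.mem_insert, Finset.mem_singleton, not_or] at he
      have hsf : ¬ Squarefree (p ^ e) := by
        rw [Nat.squarefree_pow_iff hp.ne_one he.1]
        exact fun h => he.2 h.2
      simp [hFdef, moebius_eq_zero_of_not_squarefree hsf]
  -- define correction factors
  set c : Nat.Primes → ℝ :=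
    fun p => if (p : ℕ) ∣ d then (1 + ((p : ℕ) : ℝ)⁻¹)⁻¹ else 1 with hcdef
  have hp2 : ∀ p : Nat.Primes, (2 : ℝ) ≤ ((p : ℕ) : ℝ) := by
    intro p; exact_mod_cast p.prop.two_le
  have hppos : ∀ p : Nat.Primes, (0 : ℝ) < ((p : ℕ) : ℝ) := fun p =>
    lt_of_lt_of_le two_pos (hp2 p)
  have hne : ∀ p : Nat.Primes, (1 : ℝ) - (((p : ℕ) : ℝ)⁻¹) ^ 2 ≠ 0 := by
    intro p
    have h1 : (((p : ℕ) : ℝ))⁻¹ < 1 := by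
      rw [inv_lt_one_iff₀]; right; linarith [hp2 p]
    have := pow_lt_one₀ (by positivity : (0:ℝ) ≤ (((p : ℕ) : ℝ))⁻¹) h1 two_ne_zero
    linarith
  have hfac : ∀ p : Nat.Primes,
      (1 : ℝ) - (Nat.gcd d (p : ℕ) : ℝ) / ((p : ℕ) : ℝ) ^ 2
        = ((1 : ℝ) - (((p : ℕ) : ℝ)⁻¹) ^ 2) * c p := by
    intro p
    have hppos := hppos p
    by_cases hdvd : (p : ℕ) ∣ d
    · have hg : Nat.gcd d (p : ℕ) = (p : ℕ) := Nat.gcd_eq_right hdvd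
      rw [hg, hcdef]
      simp only [if_pos hdvd]
      have h1p : (0 : ℝ) < 1 + (((p : ℕ) : ℝ))⁻¹ := by positivity
      field_simp
      ring
    · have hg : Nat.gcd d (p : ℕ) = 1 :=
        Nat.Coprime.gcd_eq_one ((p.prop.coprime_iff_not_dvd.mpr hdvd).symm)
      rw [hg, hcdef]
      simp only [if_neg hdvd]
      rw [mul_one, inv_pow]
      norm_num [one_div]
  -- HasProd for c
  set s : Finset Nat.Primes := d.primeFactors.attach.image
    (fun x => (⟨x.1, Nat.prime_of_mem_primeFactors x.2⟩ : Nat.Primes)) with hsdef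
  have hmem : ∀ p : Nat.Primes, p ∈ s ↔ (p : ℕ) ∈ d.primeFactors := by
    intro p
    constructor
    · intro hps
      rw [hsdef] at hps; have hps := Finset.mem_image.mp hps
      obtain ⟨x, hx, rfl⟩ := hps
      exact x.2
    · intro hpd
      rw [hsdef]; refine Finset.mem_image.mpr ?_
      exact ⟨⟨(p : ℕ), hpd⟩, Finset.mem_attach _ _, Subtype.ext rfl⟩
  have hc : HasProd c (∏ p ∈ d.primeFactors, (1 + (p : ℝ)⁻¹)⁻¹) := by
    have h1 : ∀ p : Nat.Primes, p ∉ s → c p = 1 := by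
      intro p hps
      rw [hcdef]
      apply if_neg
      intro hdvd
      exact hps ((hmem p).mpr (Nat.mem_primeFactors.mpr ⟨p.prop, hdvd, hd.ne'⟩))
    have h2 := hasProd_prod_of_ne_finset_one (L := SummationFilter.unconditional _) h1
    have h3 : ∏ p ∈ s, c p = ∏ p ∈ d.primeFactors, (1 + (p : ℝ)⁻¹)⁻¹ := by
      rw [hsdef]; erw [Finset.prod_image ?_]
      · rw [← Finset.prod_attach d.primeFactors (fun p => (1 + (p : ℝ)⁻¹)⁻¹)]
        refine Finset.prod_congr rfl fun x _ => ?_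
        rw [hcdef]
        exact if_pos (Nat.dvd_of_mem_primeFactors x.2)
      · intro x _ y _ hxy
        exact Subtype.ext (congrArg (Subtype.val : Nat.Primes → ℕ) hxy)
    rwa [h3] at h2
  -- Euler product for zeta(2)
  have htsum2 : ∑' n : ℕ, sqHom n = π ^ 2 / 6 := by
    rw [← hasSum_zeta_two.tsum_eq]
    refine tsum_congr fun n => ?_
    simp [sqHom, inv_pow, one_div]
  have hP2 : HasProd (fun p : Nat.Primes => ((1 : ℝ) - (((p : ℕ) : ℝ)⁻¹) ^ 2)⁻¹)
      (π ^ 2 / 6) := by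
    have := EulerProduct.eulerProduct_completely_multiplicative_hasProd
      (f := sqHom) summable_sqHom
    rw [htsum2] at this
    exact this
  -- combine
  have hmulP := hP2.mul hP
  have hfun : (fun p : Nat.Primes =>
      ((1 : ℝ) - (((p : ℕ) : ℝ)⁻¹) ^ 2)⁻¹ * ∑' e : ℕ, F ((p : ℕ) ^ e)) = c := by
    funext p
    rw [hloc p, hfac p, ← mul_assoc, inv_mul_cancel₀ (hne p), one_mul]
  rw [hfun] at hmulP
  have hkey := hmulP.unique hc
  have hπ : (π : ℝ) ^ 2 ≠ 0 := by positivity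
  have : (∑' h : ℕ, F h) = 6 / π ^ 2 * ∏ p ∈ d.primeFactors, (1 + (p : ℝ)⁻¹)⁻¹ := by
    field_simp at hkey ⊢
    linarith [hkey]
  exact this
end

section
/- With the same notation: if M_1 and M_2 are distinct minimal D-critical subsets of L (i.e., q_D(M_i) = q_0 is maximal and no proper nonempty subset of M_i attains q_0), then M_1 ∩ M_2 = ∅. -/
/-- distinct minimal `D`-critical subsets are disjoint. -/
theorem minimal_critical_disjoint {α : Type*} [DecidableEq α] (L : Finset α) (e : α → ℕ)
    (he : ∀ a ∈ L, 1 ≤ e a) (r : Finset α → ℕ) (hr0 : r ∅ = 0)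
    (hrsub : ∀ N₁ N₂ : Finset α, N₁ ⊆ L → N₂ ⊆ L →
      r (N₁ ∩ N₂) + r (N₁ ∪ N₂) ≤ r N₁ + r N₂)
    (hrpos : ∀ M : Finset α, M ⊆ L → M.Nonempty → 1 ≤ r M)
    (q₀ : ℚ)
    (hq₀ : ∀ M : Finset α, M ⊆ L → M.Nonempty →
      ((∑ a ∈ M, e a : ℕ) : ℚ) / (r M : ℚ) ≤ q₀)
    (M₁ M₂ : Finset α) (h₁ : M₁ ⊆ L) (h₂ : M₂ ⊆ L)
    (h₁n : M₁.Nonempty) (h₂n : M₂.Nonempty)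
    (hq₁ : ((∑ a ∈ M₁, e a : ℕ) : ℚ) / (r M₁ : ℚ) = q₀)
    (hq₂ : ((∑ a ∈ M₂, e a : ℕ) : ℚ) / (r M₂ : ℚ) = q₀)
    (hmin₁ : ∀ M' : Finset α, M' ⊂ M₁ → M'.Nonempty →
      ((∑ a ∈ M', e a : ℕ) : ℚ) / (r M' : ℚ) ≠ q₀)
    (hmin₂ : ∀ M' : Finset α, M' ⊂ M₂ → M'.Nonempty →
      ((∑ a ∈ M', e a : ℕ) : ℚ) / (r M' : ℚ) ≠ q₀)
    (hne : M₁ ≠ M₂) :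
    M₁ ∩ M₂ = ∅ := by
  by_contra hI
  have hIn : (M₁ ∩ M₂).Nonempty := Finset.nonempty_iff_ne_empty.mpr hI
  set I := M₁ ∩ M₂ with hIdef
  set U := M₁ ∪ M₂ with hUdef
  have hIL : I ⊆ L := (Finset.inter_subset_left).trans h₁
  have hUL : U ⊆ L := Finset.union_subset h₁ h₂
  have hUn : U.Nonempty := h₁n.mono Finset.subset_union_left
  -- r values positive
  have hr₁ : (0:ℚ) < (r M₁ : ℚ) := by exact_mod_cast hrpos M₁ h₁ h₁n
  have hr₂ : (0:ℚ) < (r M₂ : ℚ) := by exact_mod_cast hrpos M₂ h₂ h₂n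
  have hrI : (0:ℚ) < (r I : ℚ) := by exact_mod_cast hrpos I hIL hIn
  have hrU : (0:ℚ) < (r U : ℚ) := by exact_mod_cast hrpos U hUL hUn
  -- I is a proper subset of M₁ (or we contradict minimality of M₂)
  have hIprop : I ⊂ M₁ := by
    rcases eq_or_ne I M₁ with h | h
    · -- M₁ ⊆ M₂, so M₁ ⊂ M₂, contradiction with hmin₂
      have hsub : M₁ ⊆ M₂ := by
        rw [← h]; exact Finset.inter_subset_right
      exact absurd hq₁ (hmin₂ M₁ (Finset.ssubset_iff_subset_ne.mpr ⟨hsub, hne⟩) h₁n)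
    · exact Finset.ssubset_iff_subset_ne.mpr ⟨Finset.inter_subset_left, h⟩
  -- q(I) < q₀
  have hIle : ((∑ a ∈ I, e a : ℕ) : ℚ) / (r I : ℚ) ≤ q₀ := hq₀ I hIL hIn
  have hIne : ((∑ a ∈ I, e a : ℕ) : ℚ) / (r I : ℚ) ≠ q₀ := hmin₁ I hIprop hIn
  have hIlt : ((∑ a ∈ I, e a : ℕ) : ℚ) < q₀ * (r I : ℚ) := by
    have := lt_of_le_of_ne hIle hIne
    calc ((∑ a ∈ I, e a : ℕ) : ℚ) = ((∑ a ∈ I, e a : ℕ) : ℚ) / (r I : ℚ) * (r I : ℚ) := by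
            field_simp
      _ < q₀ * (r I : ℚ) := by exact mul_lt_mul_of_pos_right this hrI
  -- sums for M₁, M₂
  have hs₁ : ((∑ a ∈ M₁, e a : ℕ) : ℚ) = q₀ * (r M₁ : ℚ) := by
    rw [← hq₁]; field_simp
  have hs₂ : ((∑ a ∈ M₂, e a : ℕ) : ℚ) = q₀ * (r M₂ : ℚ) := by
    rw [← hq₂]; field_simp
  -- q(U) ≤ q₀
  have hUle : ((∑ a ∈ U, e a : ℕ) : ℚ) ≤ q₀ * (r U : ℚ) := by
    have := hq₀ U hUL hUn
    calc ((∑ a ∈ U, e a : ℕ) : ℚ) = ((∑ a ∈ U, e a : ℕ) : ℚ) / (r U : ℚ) * (r U : ℚ) := by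
            field_simp
      _ ≤ q₀ * (r U : ℚ) := mul_le_mul_of_nonneg_right this hrU.le
  -- q₀ ≥ 0
  have hq₀nn : 0 ≤ q₀ := hq₁ ▸ div_nonneg (by positivity) hr₁.le
  -- submodularity in ℚ
  have hsubQ : (r I : ℚ) + (r U : ℚ) ≤ (r M₁ : ℚ) + (r M₂ : ℚ) := by
    exact_mod_cast hrsub M₁ M₂ h₁ h₂
  -- sum over union + sum over inter = sum₁ + sum₂
  have hsum : ((∑ a ∈ U, e a : ℕ) : ℚ) + ((∑ a ∈ I, e a : ℕ) : ℚ)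
      = ((∑ a ∈ M₁, e a : ℕ) : ℚ) + ((∑ a ∈ M₂, e a : ℕ) : ℚ) := by
    exact_mod_cast congrArg (Nat.cast (R := ℚ)) (Finset.sum_union_inter (s₁ := M₁) (s₂ := M₂) (f := e))
  have : ((∑ a ∈ U, e a : ℕ) : ℚ) + ((∑ a ∈ I, e a : ℕ) : ℚ)
      < q₀ * (r U : ℚ) + q₀ * (r I : ℚ) := by linarith
  have : q₀ * (r U : ℚ) + q₀ * (r I : ℚ) ≤ q₀ * (r M₁ : ℚ) + q₀ * (r M₂ : ℚ) := by
    nlinarith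
  linarith [hsum, hs₁, hs₂]
end

section
/- Let p be a prime, m a positive integer, ℓ_1,...,ℓ_m linearly independent real linear forms in m variables, and ℓ_{1,p},...,ℓ_{m',p} (m' ≤ m) linearly independent linear forms in m variables with coefficients in ℚ_p. Then there exist constants γ_1, γ_2 > 1, depending only on p, m and the forms, such that for all positive reals A_1,...,A_m, B_1,...,B_{m'} with A_1···A_m·B_1···B_{m'} ≥ γ_1 and B_i ≤ γ_2^{-1} for all i, there is a nonzero x ∈ ℤ^m with |ℓ_i(x)| ≤ A_i for i = 1,...,m and |ℓ_{i,p}(x)|_p ≤ B_i for i = 1,...,m'. -/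
open MeasureTheory Set Pointwise ENNReal

noncomputable section PadicMinkowskiAux

/-- coordinatewise `Int.cast` as an additive hom `ℤ^m →+ ℝ^m`. -/
def pmIntCastHom (m : ℕ) : (Fin m → ℤ) →+ (Fin m → ℝ) :=
  AddMonoidHom.mk' (fun x j => (x j : ℝ)) (by intro x y; funext j; simp)

lemma pmIntCastHom_injective (m : ℕ) : Function.Injective (pmIntCastHom m) := by
  intro x y h
  funext j
  have h2 := congrFun h j
  simpa [pmIntCastHom] using h2

/-- A finite–index subgroup of `ℤ^m`, viewed inside `ℝ^m`, admits a fundamental domain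
whose volume is the index. -/
lemma pm_exists_fund (m : ℕ) (Λ : AddSubgroup (Fin m → ℤ))
    [Finite ((Fin m → ℤ) ⧸ Λ)] :
    ∃ F : Set (Fin m → ℝ),
      IsAddFundamentalDomain (AddSubgroup.map (pmIntCastHom m) Λ) F volume ∧
      volume F = (Nat.card ((Fin m → ℤ) ⧸ Λ) : ℝ≥0∞) := by
  classical
  set ι := pmIntCastHom m with hι
  set Q := (Fin m → ℤ) ⧸ Λ with hQ
  set box : Set (Fin m → ℝ) := Set.univ.pi fun _ => Set.Ico (0:ℝ) 1 with hbox
  have hboxmeas : MeasurableSet box := MeasurableSet.univ_pi fun _ => measurableSet_Ico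
  have hboxvol : volume box = 1 := by rw [hbox, volume_pi_pi]; simp
  set F : Set (Fin m → ℝ) := ⋃ q : Q, ((ι q.out) +ᵥ box) with hF
  have hmem : ∀ (y : Fin m → ℝ) (c : Fin m → ℤ),
      y ∈ (ι c) +ᵥ box ↔ c = fun j => ⌊y j⌋ := by
    intro y c
    rw [Set.mem_vadd_set_iff_neg_vadd_mem]
    constructor
    · intro h
      funext j
      have h1 := h j (Set.mem_univ j)
      simp only [hι, pmIntCastHom, AddMonoidHom.mk'_apply, vadd_eq_add, Pi.add_apply,
        Pi.neg_apply, Set.mem_Ico] at h1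
      refine (Int.floor_eq_iff.mpr ⟨?_, ?_⟩).symm
      · linarith [h1.1]
      · push_cast
        linarith [h1.2]
    · rintro rfl
      intro j _
      simp only [hι, pmIntCastHom, AddMonoidHom.mk'_apply, vadd_eq_add, Pi.add_apply,
        Pi.neg_apply, Set.mem_Ico]
      constructor
      · linarith [Int.floor_le (y j)]
      · linarith [Int.lt_floor_add_one (y j)]
  have hfund : IsAddFundamentalDomain (AddSubgroup.map ι Λ) F volume := by
    apply IsAddFundamentalDomain.mk'
    · exact (MeasurableSet.iUnion fun q => hboxmeas.const_vadd _).nullMeasurableSet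
    · intro y
      set fl : Fin m → ℤ := fun j => ⌊y j⌋ with hfl
      set q0 : Q := QuotientAddGroup.mk fl with hq0
      have hz : q0.out - fl ∈ Λ := by
        have h := QuotientAddGroup.out_eq' q0
        rw [hq0, QuotientAddGroup.eq] at h
        simpa [neg_add_eq_sub] using neg_mem h
      have key : ∀ z : Fin m → ℤ, z ∈ Λ → ((ι z + y) ∈ F ↔ z = q0.out - fl) := by
        intro z hzΛ
        constructor
        · intro hzy
          obtain ⟨q, hq⟩ := Set.mem_iUnion.1 hzy
          have h1 := (hmem _ _).1 hq
          have h2 : q.out = z + fl := by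
            rw [h1]; funext j
            simp only [hι, pmIntCastHom, AddMonoidHom.mk'_apply, Pi.add_apply]
            rw [Int.floor_intCast_add]
          have h3 : q = q0 := by
            rw [← QuotientAddGroup.out_eq' q, h2, hq0]
            exact QuotientAddGroup.eq.2 (by simpa using neg_mem hzΛ)
          rw [← h3, h2]; abel
        · rintro rfl
          refine Set.mem_iUnion.2 ⟨q0, (hmem _ _).2 ?_⟩
          funext j
          have hco : (ι (q0.out - fl) + y) j = ((q0.out j - fl j : ℤ) : ℝ) + y j := by
            simp [hι, pmIntCastHom]
          rw [hco, Int.floor_intCast_add]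
          have hfj : ⌊y j⌋ = fl j := rfl
          omega
      refine ⟨⟨ι (q0.out - fl), ⟨_, hz, rfl⟩⟩, ?_, ?_⟩
      · show ι (q0.out - fl) +ᵥ y ∈ F
        rw [vadd_eq_add]
        exact (key _ hz).2 rfl
      · rintro ⟨v, z, hzΛ, rfl⟩ hv
        have := (key z hzΛ).1 (by rw [← vadd_eq_add]; exact hv)
        subst this
        rfl
  have hdisj : Pairwise fun q q' : Q => Disjoint ((ι q.out) +ᵥ box) ((ι q'.out) +ᵥ box) := by
    intro q q' hne
    rw [Set.disjoint_left]
    intro w hw hw'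
    apply hne
    have h1 := (hmem w _).1 hw
    have h2 := (hmem w _).1 hw'
    have := h1.trans h2.symm
    rw [← QuotientAddGroup.out_eq' q, ← QuotientAddGroup.out_eq' q', this]
  have hvolF : volume F = (Nat.card Q : ℝ≥0∞) := by
    haveI := Fintype.ofFinite Q
    rw [hF, measure_iUnion hdisj fun q => hboxmeas.const_vadd _]
    simp only [measure_vadd, hboxvol]
    rw [tsum_fintype]
    simp [Finset.card_univ, Nat.card_eq_fintype_card]
  exact ⟨F, hfund, hvolF⟩

/-- Linearly independent forms give an injective coordinate map. -/
lemma pm_pi_injective (m : ℕ) (hm : 0 < m) (ℓ : Fin m → ((Fin m → ℝ) →ₗ[ℝ] ℝ))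
    (hℓ : LinearIndependent ℝ ℓ) : Function.Injective (LinearMap.pi ℓ) := by
  haveI : Nonempty (Fin m) := ⟨⟨0, hm⟩⟩
  rw [← LinearMap.ker_eq_bot]
  refine (Submodule.eq_bot_iff _).2 fun y hy => ?_
  have hy' : ∀ i, ℓ i y = 0 := fun i => congrFun (LinearMap.mem_ker.1 hy) i
  have hcard : Fintype.card (Fin m) = Module.finrank ℝ ((Fin m → ℝ) →ₗ[ℝ] ℝ) := by
    simp [Module.finrank_linearMap]
  let bD := basisOfLinearIndependentOfCardEqFinrank hℓ hcard
  have hbD : ∀ i, bD i = ℓ i := fun i => by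
    simp [bD, coe_basisOfLinearIndependentOfCardEqFinrank]
  rw [← Module.forall_dual_apply_eq_zero_iff ℝ]
  intro φ
  rw [← bD.sum_repr φ]
  simp [LinearMap.sum_apply, hbD, hy']

/-- Volume of the symmetric box pulled back by a linear map. -/
lemma pm_body_volume (m : ℕ) (T : (Fin m → ℝ) →ₗ[ℝ] (Fin m → ℝ))
    (hdet : LinearMap.det T ≠ 0) (A : Fin m → ℝ) (hA : ∀ i, 0 < A i) :
    volume (T ⁻¹' (Set.univ.pi fun i => Set.Icc (-(A i)) (A i)))
      = ENNReal.ofReal (|LinearMap.det T|⁻¹ * ∏ i, (2 * A i)) := by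
  rw [Measure.addHaar_preimage_linearMap volume hdet, volume_pi_pi]
  have h1 : ∀ i : Fin m, volume (Set.Icc (-(A i)) (A i)) = ENNReal.ofReal (2 * A i) := by
    intro i; rw [Real.volume_Icc]; congr 1; ring
  rw [Finset.prod_congr rfl fun i _ => h1 i,
    ← ENNReal.ofReal_prod_of_nonneg (fun i _ => by nlinarith [hA i]), abs_inv,
    ← ENNReal.ofReal_mul (inv_nonneg.2 (abs_nonneg _))]

end PadicMinkowskiAux

set_option maxHeartbeats 2000000

/-- "p-adic Minkowski": given linearly independent real linear forms
`ℓ₁,…,ℓ_m` and linearly independent `p`-adic linear forms `ℓ_{1,p},…,ℓ_{m',p}` in `m`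
variables, there are `γ₁, γ₂ > 1` such that whenever positive reals `A_i`, `B_i` satisfy
`A₁⋯A_m·B₁⋯B_{m'} ≥ γ₁` and `B_i ≤ γ₂⁻¹`, there is a nonzero `x ∈ ℤ^m` with
`|ℓ_i(x)| ≤ A_i` and `|ℓ_{i,p}(x)|_p ≤ B_i`. -/
theorem padic_minkowski (p : ℕ) [Fact p.Prime] (m m' : ℕ) (hm : 0 < m) (hm' : m' ≤ m)
    (ℓ : Fin m → ((Fin m → ℝ) →ₗ[ℝ] ℝ)) (hℓ : LinearIndependent ℝ ℓ)
    (ℓp : Fin m' → ((Fin m → ℚ_[p]) →ₗ[ℚ_[p]] ℚ_[p]))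
    (hℓp : LinearIndependent ℚ_[p] ℓp) :
    ∃ γ₁ γ₂ : ℝ, 1 < γ₁ ∧ 1 < γ₂ ∧
      ∀ (A : Fin m → ℝ) (B : Fin m' → ℝ), (∀ i, 0 < A i) → (∀ i, 0 < B i) →
        γ₁ ≤ (∏ i, A i) * ∏ i, B i → (∀ i, B i ≤ γ₂⁻¹) →
        ∃ x : Fin m → ℤ, x ≠ 0 ∧
          (∀ i, |ℓ i (fun j => (x j : ℝ))| ≤ A i) ∧
          (∀ i, ‖ℓp i (fun j => (x j : ℚ_[p]))‖ ≤ B i) := by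
  classical
  have hp1 : 1 < p := (Fact.out : p.Prime).one_lt
  have hnp : (1:ℝ) < p := by exact_mod_cast hp1
  have hppos : (0:ℝ) < p := lt_trans one_pos hnp
  -- real side: the linear map T and its determinant
  set T : (Fin m → ℝ) →ₗ[ℝ] (Fin m → ℝ) := LinearMap.pi ℓ with hTdef
  have hTapp : ∀ (y : Fin m → ℝ) i, T y i = ℓ i y := fun y i => rfl
  have hTinj : Function.Injective T := pm_pi_injective m hm ℓ hℓ
  have hdet : LinearMap.det T ≠ 0 := by
    intro h
    have h2 := LinearMap.bot_lt_ker_of_det_eq_zero h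
    rw [LinearMap.ker_eq_bot.2 hTinj] at h2
    exact lt_irrefl _ h2
  set D : ℝ := |LinearMap.det T| with hDdef
  have hD : 0 < D := abs_pos.2 hdet
  -- p-adic side: coefficients
  set a : Fin m' → Fin m → ℚ_[p] := fun i j => ℓp i (fun j' => if j = j' then 1 else 0)
    with hadef
  have hexp : ∀ i (c : Fin m → ℚ_[p]), ℓp i c = ∑ j, c j * a i j := by
    intro i c
    rw [LinearMap.pi_apply_eq_sum_univ (ℓp i) c]
    simp [hadef, smul_eq_mul]
  -- bounds on coefficients
  have hex_n : ∀ i : Fin m', ∃ nn : ℕ, ∀ j, ‖a i j‖ ≤ (p:ℝ) ^ nn := by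
    intro i
    obtain ⟨nn, hnn⟩ := pow_unbounded_of_one_lt (∑ j, ‖a i j‖) hnp
    refine ⟨nn, fun j => le_trans ?_ hnn.le⟩
    exact Finset.single_le_sum (f := fun j => ‖a i j‖) (fun _ _ => norm_nonneg _)
      (Finset.mem_univ j)
  choose n hn using hex_n
  -- integral p-adic coefficients
  have hbmem : ∀ i j, ‖(p:ℚ_[p]) ^ (n i) * a i j‖ ≤ 1 := by
    intro i j
    rw [norm_mul, Padic.norm_p_pow]
    calc (p:ℝ) ^ (-(n i):ℤ) * ‖a i j‖ ≤ (p:ℝ) ^ (-(n i):ℤ) * (p:ℝ) ^ (n i) := by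
          apply mul_le_mul_of_nonneg_left (hn i _) (zpow_nonneg hppos.le _)
      _ = 1 := by
          rw [← zpow_natCast (p:ℝ) (n i), ← zpow_add₀ (ne_of_gt hppos)]
          simp
  set b : Fin m' → Fin m → ℤ_[p] := fun i j => ⟨(p:ℚ_[p]) ^ (n i) * a i j, hbmem i j⟩
    with hbdef
  set C : ℝ := ∏ i, (p:ℝ) ^ (n i + 1) with hCdef
  have hC : 0 < C := Finset.prod_pos fun i _ => pow_pos hppos _
  refine ⟨C * D + 2, 2, by nlinarith, one_lt_two, ?_⟩
  intro A B hA hB hprod hB2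
  -- choose exponents k i
  have hex_k : ∀ i : Fin m', ∃ kk : ℕ, (p:ℝ) ^ (n i) / B i ≤ (p:ℝ) ^ kk := by
    intro i
    obtain ⟨kk, hkk⟩ := pow_unbounded_of_one_lt ((p:ℝ) ^ (n i) / B i) hnp
    exact ⟨kk, hkk.le⟩
  set k : Fin m' → ℕ := fun i => Nat.find (hex_k i) with hkdef
  have hk1 : ∀ i, (p:ℝ) ^ (n i) / B i ≤ (p:ℝ) ^ (k i) := fun i => Nat.find_spec (hex_k i)
  have hk2 : ∀ i, (p:ℝ) ^ (k i) ≤ (p:ℝ) ^ (n i + 1) / B i := by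
    intro i
    rcases Nat.eq_zero_or_pos (k i) with h0 | hpos
    · rw [h0, pow_zero, le_div_iff₀ (hB i)]
      have hble : B i ≤ 1 := le_trans (hB2 i) (by norm_num)
      calc (1:ℝ) * B i = B i := one_mul _
        _ ≤ 1 := hble
        _ ≤ (p:ℝ) ^ (n i + 1) := one_le_pow₀ hnp.le
    · obtain ⟨l, hl⟩ := Nat.exists_eq_succ_of_ne_zero (Nat.pos_iff_ne_zero.1 hpos)
      have hlk : l < k i := by omega
      have hmin := Nat.find_min (hex_k i) (hkdef ▸ hlk)
      push_neg at hmin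
      have hlt' : (p:ℝ) ^ l < (p:ℝ) ^ (n i) / B i := hmin
      have hplpos : (0:ℝ) < (p:ℝ) ^ l := pow_pos hppos _
      calc (p:ℝ) ^ (k i) = (p:ℝ) * (p:ℝ) ^ l := by rw [hl, pow_succ]; ring
        _ ≤ (p:ℝ) * ((p:ℝ) ^ (n i) / B i) := by nlinarith
        _ = (p:ℝ) ^ (n i + 1) / B i := by rw [pow_succ]; ring
  -- the p-adic congruence lattice
  haveI hNZ : ∀ i : Fin m', NeZero (p ^ k i) :=
    fun i => ⟨pow_ne_zero _ (Nat.Prime.ne_zero Fact.out)⟩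
  set Lhom : Fin m' → ((Fin m → ℤ) →+ ℤ_[p]) := fun i => AddMonoidHom.mk'
    (fun x => ∑ j, (x j : ℤ_[p]) * b i j)
    (by intro x y; simp only [Pi.add_apply, Int.cast_add, add_mul, Finset.sum_add_distrib])
    with hLhomdef
  have hLhomapp : ∀ i x, Lhom i x = ∑ j, (x j : ℤ_[p]) * b i j := fun i x => rfl
  set φ : (Fin m → ℤ) →+ (∀ i : Fin m', ZMod (p ^ k i)) := AddMonoidHom.mk'
    (fun x i => PadicInt.toZModPow (k i) (Lhom i x))
    (by intro x y; funext i; simp) with hφdef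
  set Λ : AddSubgroup (Fin m → ℤ) := φ.ker with hΛdef
  haveI hQfin : Finite ((Fin m → ℤ) ⧸ Λ) :=
    Finite.of_equiv _ (QuotientAddGroup.quotientKerEquivRange φ).symm.toEquiv
  set N : ℕ := Nat.card ((Fin m → ℤ) ⧸ Λ) with hNdef
  have hcard : N ≤ ∏ i, p ^ k i := by
    rw [hNdef, hΛdef, Nat.card_congr (QuotientAddGroup.quotientKerEquivRange φ).toEquiv]
    calc Nat.card φ.range ≤ Nat.card (∀ i : Fin m', ZMod (p ^ k i)) :=
          Nat.card_le_card_of_injective _ Subtype.val_injective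
      _ = ∏ i, p ^ k i := by rw [Nat.card_pi]; simp [Nat.card_zmod]
  -- fundamental domain
  obtain ⟨F, hfund, hvolF⟩ := pm_exists_fund m Λ
  haveI : Countable (AddSubgroup.map (pmIntCastHom m) Λ) :=
    Countable.of_equiv _ (AddSubgroup.equivMapOfInjective _ _ (pmIntCastHom_injective m)).toEquiv
  -- the convex body
  set box2 : Set (Fin m → ℝ) := Set.univ.pi fun i => Set.Icc (-(A i)) (A i) with hbox2
  set S : Set (Fin m → ℝ) := T ⁻¹' box2 with hSdef
  have hconv : Convex ℝ S := (convex_pi fun i _ => convex_Icc _ _).linear_preimage T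
  have hsymm : ∀ y ∈ S, -y ∈ S := by
    intro y hy i hi
    have h1 := hy i hi
    simp only [Set.mem_Icc] at h1 ⊢
    rw [map_neg]
    simp only [Pi.neg_apply]
    constructor <;> linarith [h1.1, h1.2]
  -- volume computations
  have hPA : 0 < ∏ i, A i := Finset.prod_pos fun i _ => hA i
  have hPB : 0 < ∏ i, B i := Finset.prod_pos fun i _ => hB i
  have hSvol : volume S = ENNReal.ofReal (D⁻¹ * ∏ i, (2 * A i)) :=
    pm_body_volume m T hdet A hA
  have hNlt : (N:ℝ) < D⁻¹ * ∏ i, A i := by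
    have h1 : (N:ℝ) ≤ ∏ i, (p:ℝ) ^ k i := by
      calc (N:ℝ) ≤ ((∏ i, p ^ k i : ℕ):ℝ) := by exact_mod_cast hcard
        _ = ∏ i, (p:ℝ) ^ k i := by push_cast; rfl
    have h2 : ∏ i, (p:ℝ) ^ k i ≤ C / ∏ i, B i := by
      rw [hCdef, ← Finset.prod_div_distrib]
      exact Finset.prod_le_prod (fun i _ => pow_nonneg hppos.le _) (fun i _ => hk2 i)
    have h3 : C * D < (∏ i, A i) * ∏ i, B i := by nlinarith
    have h4 : C / ∏ i, B i < D⁻¹ * ∏ i, A i := by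
      rw [div_lt_iff₀ hPB]
      rw [show D⁻¹ * (∏ i, A i) * ∏ i, B i = ((∏ i, A i) * ∏ i, B i) / D by
        field_simp]
      rw [lt_div_iff₀ hD]
      linarith
    linarith
  have hfin : Module.finrank ℝ (Fin m → ℝ) = m := by
    simp [Module.finrank_pi]
  have hlt : volume F * 2 ^ Module.finrank ℝ (Fin m → ℝ) < volume S := by
    rw [hvolF, hSvol, hfin, ← hNdef]
    have hprod2 : ∏ i, (2 * A i) = 2 ^ m * ∏ i, A i := by
      rw [Finset.prod_mul_distrib]
      simp [Finset.prod_const, Finset.card_univ]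
    have hreal : (N:ℝ) * 2 ^ m < D⁻¹ * ∏ i, (2 * A i) := by
      rw [hprod2]
      have h2m : (0:ℝ) < 2 ^ m := by positivity
      nlinarith [hNlt]
    calc ((N:ℕ):ℝ≥0∞) * 2 ^ m = ENNReal.ofReal ((N:ℝ) * 2 ^ m) := by
          rw [ENNReal.ofReal_mul (by positivity), ENNReal.ofReal_natCast,
            ← ENNReal.ofReal_ofNat 2, ← ENNReal.ofReal_pow (by norm_num)]
      _ < ENNReal.ofReal (D⁻¹ * ∏ i, (2 * A i)) := by
          refine (ENNReal.ofReal_lt_ofReal_iff ?_).2 hreal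
          exact mul_pos (inv_pos.2 hD) (Finset.prod_pos fun i _ => by nlinarith [hA i])
  obtain ⟨x, hx0, hxS⟩ :=
    exists_ne_zero_mem_lattice_of_measure_mul_two_pow_lt_measure hfund hsymm hconv hlt
  obtain ⟨z, hzΛ, hzval⟩ := x.2
  have hz0 : z ≠ 0 := by
    intro h
    apply hx0
    apply Subtype.ext
    rw [← hzval, h]
    simp
  refine ⟨z, hz0, ?_, ?_⟩
  · intro i
    have hmem2 : T ((x : Fin m → ℝ)) ∈ box2 := hxS
    have h1 := hmem2 i (Set.mem_univ i)
    rw [← hzval] at h1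
    have hco : (pmIntCastHom m z : Fin m → ℝ) = fun j => (z j : ℝ) := rfl
    rw [hTapp, hco] at h1
    simp only [Set.mem_Icc] at h1
    exact abs_le.2 ⟨h1.1, h1.2⟩
  · intro i
    have hker : φ z = 0 := hzΛ
    have hzi : PadicInt.toZModPow (k i) (Lhom i z) = 0 := by
      have h1 := congrFun hker i
      simpa [hφdef] using h1
    have hnorm : ‖Lhom i z‖ ≤ (p:ℝ) ^ (-(k i):ℤ) := by
      rw [PadicInt.norm_le_pow_iff_mem_span_pow, ← PadicInt.ker_toZModPow, RingHom.mem_ker]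
      exact hzi
    have hbco : ∀ j, ((b i j : ℤ_[p]) : ℚ_[p]) = (p:ℚ_[p]) ^ (n i) * a i j := fun j => rfl
    have hcoe : ((Lhom i z : ℤ_[p]) : ℚ_[p]) =
        (p:ℚ_[p]) ^ (n i) * ℓp i (fun j => (z j : ℚ_[p])) := by
      have hsum : ((∑ j, (z j : ℤ_[p]) * b i j : ℤ_[p]) : ℚ_[p])
          = ∑ j, (((z j : ℤ_[p]) * b i j : ℤ_[p]) : ℚ_[p]) :=
        map_sum PadicInt.Coe.ringHom _ Finset.univ
      rw [hexp i, hLhomapp i z, hsum, Finset.mul_sum]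
      refine Finset.sum_congr rfl fun j _ => ?_
      show (((z j : ℤ_[p]) * b i j : ℤ_[p]) : ℚ_[p]) = _
      push_cast [hbco]
      ring
    have hnormq : ‖ℓp i (fun j => (z j : ℚ_[p]))‖ = (p:ℝ) ^ (n i) * ‖Lhom i z‖ := by
      have h5 : ‖Lhom i z‖ = (p:ℝ) ^ (-(n i):ℤ) * ‖ℓp i (fun j => (z j : ℚ_[p]))‖ := by
        rw [PadicInt.norm_def, hcoe, norm_mul, Padic.norm_p_pow]
      rw [h5, ← mul_assoc, ← zpow_natCast (p:ℝ) (n i), ← zpow_add₀ (ne_of_gt hppos)]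
      simp
    rw [hnormq]
    calc (p:ℝ) ^ (n i) * ‖Lhom i z‖ ≤ (p:ℝ) ^ (n i) * (p:ℝ) ^ (-(k i):ℤ) :=
          mul_le_mul_of_nonneg_left hnorm (pow_nonneg hppos.le _)
      _ ≤ B i := by
          rw [zpow_neg, zpow_natCast, ← div_eq_mul_inv,
            div_le_iff₀ (by positivity : (0:ℝ) < (p:ℝ) ^ (k i))]
          have h6 := (div_le_iff₀ (hB i)).1 (hk1 i)
          nlinarith
end

section
/- Let F(X,Y) ∈ ℤ[X,Y] be a binary form of degree n that splits over ℚ as F = a·∏_{i=1}^n (X − β_i Y) with a ∈ ℤ, β_i ∈ ℚ distinct. Let p, q be distinct primes such that |a|_p = |a|_q = 1, |β_i|_p ≤ 1, |β_i|_q ≤ 1 for all i, and |β_i − β_j|_p = |β_i − β_j|_q = 1 for all i ≠ j. Then for all positive integers k, l there exist coprime integers x, y with F(x,y) ≠ 0 and [F(x,y)]_{{p,q}} = p^k q^l. -/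
/-- The `S`-part of a nonzero integer `m`. -/
def Spart (S : Finset ℕ) (m : ℤ) : ℕ :=
  ∏ p ∈ S, p ^ (m.natAbs.factorization p)

lemma padicNorm_prod {ι : Type*} (p : ℕ) [Fact p.Prime] (s : Finset ι) (f : ι → ℚ) :
    padicNorm p (∏ i ∈ s, f i) = ∏ i ∈ s, padicNorm p (f i) := by
  classical
  induction s using Finset.cons_induction with
  | empty => simp [padicNorm.one]
  | cons i s hi ih => rw [Finset.prod_cons, Finset.prod_cons, padicNorm.mul, ih]

lemma not_dvd_den_of_padicNorm_le_one {p : ℕ} (hp : p.Prime) {r : ℚ}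
    (h : padicNorm p r ≤ 1) : ¬ p ∣ r.den := by
  haveI := Fact.mk hp
  intro hd
  have hr : r ≠ 0 := by
    rintro rfl
    rw [Rat.den_zero, Nat.dvd_one] at hd
    exact hp.one_lt.ne' hd
  have hnum : ¬ (p:ℤ) ∣ r.num := fun hn =>
    hp.not_dvd_one ((Nat.dvd_gcd (Int.natCast_dvd.mp hn) hd).trans (dvd_of_eq r.reduced))
  have h1 : padicValInt p r.num = 0 := padicValInt.eq_zero_of_not_dvd hnum
  have h2 : 1 ≤ padicValNat p r.den :=
    one_le_padicValNat_of_dvd r.pos.ne' hd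
  have hv : padicValRat p r < 0 := by
    rw [padicValRat_def, h1]; omega
  rw [padicNorm.eq_zpow_of_nonzero hr] at h
  have hlt : (1:ℚ) < (p:ℚ) ^ (-padicValRat p r) :=
    one_lt_zpow₀ (by exact_mod_cast hp.one_lt) (by omega)
  linarith

lemma num_den_of_padicNorm_eq_one {p : ℕ} (hp : p.Prime) {r : ℚ}
    (h : padicNorm p r = 1) : ¬ p ∣ r.num.natAbs ∧ ¬ p ∣ r.den := by
  haveI := Fact.mk hp
  have hr : r ≠ 0 := by rintro rfl; simp [padicNorm.zero] at h
  have hden : ¬ p ∣ r.den := not_dvd_den_of_padicNorm_le_one hp h.le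
  have hv : padicValRat p r = 0 := by
    rw [padicNorm.eq_zpow_of_nonzero hr] at h
    have := zpow_right_injective₀ (a := (p:ℚ)) (by exact_mod_cast hp.pos)
      (by exact_mod_cast hp.one_lt.ne') (h.trans (zpow_zero _).symm)
    omega
  have hd0 : padicValNat p r.den = 0 := padicValNat.eq_zero_of_not_dvd hden
  have hn0 : padicValNat p r.num.natAbs = 0 := by
    have := padicValRat_def p r
    unfold padicValInt at this
    omega
  refine ⟨?_, hden⟩
  rw [padicValNat.eq_zero_iff] at hn0
  rcases hn0 with h1 | h2 | h3
  · exact absurd h1 hp.one_lt.ne'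
  · exact absurd (Int.natAbs_eq_zero.mp h2) (Rat.num_ne_zero.mpr hr)
  · exact h3

lemma padicNorm_pow (p : ℕ) [Fact p.Prime] (x : ℚ) (m : ℕ) :
    padicNorm p (x ^ m) = (padicNorm p x) ^ m := by
  induction m with
  | zero => simp [padicNorm.one]
  | succ m ih => rw [pow_succ, pow_succ, padicNorm.mul, ih]

lemma eval_cast_eq_aeval (F : MvPolynomial (Fin 2) ℤ) (v : Fin 2 → ℤ) :
    ((MvPolynomial.eval v F : ℤ) : ℚ) = MvPolynomial.aeval (fun i => ((v i : ℤ) : ℚ)) F := by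
  have h := MvPolynomial.map_eval₂Hom (RingHom.id ℤ) v (Int.castRingHom ℚ) F
  rw [MvPolynomial.aeval_def]
  rw [show MvPolynomial.eval v F = MvPolynomial.eval₂Hom (RingHom.id ℤ) v F from rfl]
  rw [show ((MvPolynomial.eval₂Hom (RingHom.id ℤ) v F : ℤ) : ℚ)
      = (Int.castRingHom ℚ) (MvPolynomial.eval₂Hom (RingHom.id ℤ) v F) from rfl, h]
  rfl

/-- let `F ∈ ℤ[X,Y]` split over `ℚ` as `a·∏(X − βᵢY)` with distinct rational
`βᵢ`, and let `p ≠ q` be primes with `|a|_p = |a|_q = 1`, `|βᵢ|_p, |βᵢ|_q ≤ 1` and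
`|βᵢ − βⱼ|_p = |βᵢ − βⱼ|_q = 1` for `i ≠ j`. Then for all `k, l ≥ 1` there are coprime
integers `x, y` with `F(x,y) ≠ 0` and `[F(x,y)]_{{p,q}} = p^k q^l`. -/
theorem Spart_split_form_attains (n : ℕ) (hn : 2 ≤ n) (F : MvPolynomial (Fin 2) ℤ)
    (a : ℤ) (β : Fin n → ℚ) (hβ : Function.Injective β)
    (hsplit : ∀ x y : ℚ,
      (MvPolynomial.aeval ![x, y]) F = (a : ℚ) * ∏ i, (x - β i * y))
    (p q : ℕ) (hp : p.Prime) (hq : q.Prime) (hpq : p ≠ q)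
    (hap : padicNorm p (a : ℚ) = 1) (haq : padicNorm q (a : ℚ) = 1)
    (hβp : ∀ i, padicNorm p (β i) ≤ 1) (hβq : ∀ i, padicNorm q (β i) ≤ 1)
    (hdp : ∀ i j, i ≠ j → padicNorm p (β i - β j) = 1)
    (hdq : ∀ i j, i ≠ j → padicNorm q (β i - β j) = 1) :
    ∀ k l : ℕ, 0 < k → 0 < l → ∃ x y : ℤ, IsCoprime x y ∧
      MvPolynomial.eval ![x, y] F ≠ 0 ∧
      Spart {p, q} (MvPolynomial.eval ![x, y] F) = p ^ k * q ^ l := by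
  intro k l hk hl
  haveI fp := Fact.mk hp
  haveI fq := Fact.mk hq
  have hp1 : (1:ℚ) < p := by exact_mod_cast hp.one_lt
  have hq1 : (1:ℚ) < q := by exact_mod_cast hq.one_lt
  set i0 : Fin n := ⟨0, by omega⟩ with hi0def
  set i1 : Fin n := ⟨1, by omega⟩ with hi1def
  have hi01 : i0 ≠ i1 := by simp [hi0def, hi1def, Fin.ext_iff]
  have hpZ : Prime (p:ℤ) := Nat.prime_iff_prime_int.mp hp
  have hqZ : Prime (q:ℤ) := Nat.prime_iff_prime_int.mp hq
  -- denominator facts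
  have hd0p : ¬ p ∣ (β i0).den := not_dvd_den_of_padicNorm_le_one hp (hβp i0)
  have hd0q : ¬ q ∣ (β i0).den := not_dvd_den_of_padicNorm_le_one hq (hβq i0)
  have hd1p : ¬ p ∣ (β i1).den := not_dvd_den_of_padicNorm_le_one hp (hβp i1)
  have hd1q : ¬ q ∣ (β i1).den := not_dvd_den_of_padicNorm_le_one hq (hβq i1)
  have hNDp := num_den_of_padicNorm_eq_one hp (hdp i1 i0 hi01.symm)
  have hNDq := num_den_of_padicNorm_eq_one hq (hdq i1 i0 hi01.symm)
  -- the integers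
  obtain ⟨u, hu⟩ : ∃ u : ℤ, u = ((β i0).den : ℤ) * ((β i1).den : ℤ) * (β i1 - β i0).num :=
    ⟨_, rfl⟩
  obtain ⟨Δ, hΔ⟩ : ∃ d : ℤ, d = (p:ℤ)^k - (q:ℤ)^l := ⟨_, rfl⟩
  obtain ⟨Y, hY⟩ : ∃ Y : ℤ, Y = ((β i0).den : ℤ) * ((β i1).den : ℤ) * ((β i1 - β i0).den : ℤ) * Δ :=
    ⟨_, rfl⟩
  obtain ⟨X, hX⟩ : ∃ X : ℤ, X = u * (p:ℤ)^k + (β i0).num * ((β i1).den : ℤ) * ((β i1 - β i0).den : ℤ) * Δ :=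
    ⟨_, rfl⟩
  -- coprimality of u, Δ, Y to p and q
  have hup : ¬ (p:ℤ) ∣ u := by
    rw [hu]
    intro h
    rcases (hpZ.dvd_mul.mp h) with h | h
    · rcases (hpZ.dvd_mul.mp h) with h | h
      · exact hd0p (Int.natCast_dvd_natCast.mp h)
      · exact hd1p (Int.natCast_dvd_natCast.mp h)
    · exact hNDp.1 (Int.natCast_dvd.mp h)
  have huq : ¬ (q:ℤ) ∣ u := by
    rw [hu]
    intro h
    rcases (hqZ.dvd_mul.mp h) with h | h
    · rcases (hqZ.dvd_mul.mp h) with h | h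
      · exact hd0q (Int.natCast_dvd_natCast.mp h)
      · exact hd1q (Int.natCast_dvd_natCast.mp h)
    · exact hNDq.1 (Int.natCast_dvd.mp h)
  have hΔp : ¬ (p:ℤ) ∣ Δ := by
    rw [hΔ]
    intro h
    have h1 : (p:ℤ) ∣ (p:ℤ)^k := dvd_pow_self _ hk.ne'
    have h2 : (p:ℤ) ∣ (q:ℤ)^l := (dvd_sub_right h1).mp (by simpa using h)
    have := Int.natCast_dvd_natCast.mp (hpZ.dvd_of_dvd_pow h2)
    exact hpq ((Nat.prime_dvd_prime_iff_eq hp hq).mp this)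
  have hΔq : ¬ (q:ℤ) ∣ Δ := by
    rw [hΔ]
    intro h
    have h1 : (q:ℤ) ∣ (q:ℤ)^l := dvd_pow_self _ hl.ne'
    have h2 : (q:ℤ) ∣ (p:ℤ)^k := by
      have h3 := dvd_add h h1
      simpa using h3
    have := Int.natCast_dvd_natCast.mp (hqZ.dvd_of_dvd_pow h2)
    exact hpq ((Nat.prime_dvd_prime_iff_eq hq hp).mp this).symm
  have hYp : ¬ (p:ℤ) ∣ Y := by
    rw [hY]
    intro h
    rcases hpZ.dvd_mul.mp h with h | h
    · rcases hpZ.dvd_mul.mp h with h | h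
      · rcases hpZ.dvd_mul.mp h with h | h
        · exact hd0p (Int.natCast_dvd_natCast.mp h)
        · exact hd1p (Int.natCast_dvd_natCast.mp h)
      · exact hNDp.2 (Int.natCast_dvd_natCast.mp h)
    · exact hΔp h
  have hYq : ¬ (q:ℤ) ∣ Y := by
    rw [hY]
    intro h
    rcases hqZ.dvd_mul.mp h with h | h
    · rcases hqZ.dvd_mul.mp h with h | h
      · rcases hqZ.dvd_mul.mp h with h | h
        · exact hd0q (Int.natCast_dvd_natCast.mp h)
        · exact hd1q (Int.natCast_dvd_natCast.mp h)
      · exact hNDq.2 (Int.natCast_dvd_natCast.mp h)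
    · exact hΔq h
  have hY0 : Y ≠ 0 := fun h => hYp (h ▸ dvd_zero _)
  have hu0 : u ≠ 0 := fun h => hup (h ▸ dvd_zero _)
  -- rational identities
  have e0 : ((β i0).num : ℚ) = β i0 * ((β i0).den : ℚ) :=
    (Rat.mul_den_eq_num (β i0)).symm
  have eN : ((β i1 - β i0).num : ℚ) = (β i1 - β i0) * ((β i1 - β i0).den : ℚ) :=
    (Rat.mul_den_eq_num (β i1 - β i0)).symm
  have hxy0 : (X:ℚ) - β i0 * (Y:ℚ) = (u:ℚ) * (p:ℚ)^k := by
    rw [hX, hY, hu, hΔ]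
    push_cast
    rw [e0, eN]
    ring
  have hxy1 : (X:ℚ) - β i1 * (Y:ℚ) = (u:ℚ) * (q:ℚ)^l := by
    rw [hX, hY, hu, hΔ]
    push_cast
    rw [e0, eN]
    ring
  -- norms of basics
  have hunp : padicNorm p (u:ℚ) = 1 := (padicNorm.int_eq_one_iff u).mpr hup
  have hunq : padicNorm q (u:ℚ) = 1 := (padicNorm.int_eq_one_iff u).mpr huq
  have hYnp : padicNorm p (Y:ℚ) = 1 := (padicNorm.int_eq_one_iff Y).mpr hYp
  have hYnq : padicNorm q (Y:ℚ) = 1 := (padicNorm.int_eq_one_iff Y).mpr hYq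
  have hppk : padicNorm p ((p:ℚ)^k) = (p:ℚ)^(-(k:ℤ)) := by
    rw [padicNorm_pow _ _ _, padicNorm.padicNorm_p hp.one_lt]
    rw [inv_pow, ← zpow_natCast, ← zpow_neg]
  have hqql : padicNorm q ((q:ℚ)^l) = (q:ℚ)^(-(l:ℤ)) := by
    rw [padicNorm_pow _ _ _, padicNorm.padicNorm_p hq.one_lt]
    rw [inv_pow, ← zpow_natCast, ← zpow_neg]
  have hpql : padicNorm p ((q:ℚ)^l) = 1 := by
    rw [padicNorm_pow _ _ _, (padicNorm.nat_eq_one_iff q).mpr, one_pow]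
    exact fun h => hpq ((Nat.prime_dvd_prime_iff_eq hp hq).mp h)
  have hqpk : padicNorm q ((p:ℚ)^k) = 1 := by
    rw [padicNorm_pow _ _ _, (padicNorm.nat_eq_one_iff p).mpr, one_pow]
    exact fun h => hpq ((Nat.prime_dvd_prime_iff_eq hq hp).mp h).symm
  have hpk_lt : (p:ℚ)^(-(k:ℤ)) < 1 := zpow_lt_one_of_neg₀ hp1 (by omega)
  have hql_lt : (q:ℚ)^(-(l:ℤ)) < 1 := zpow_lt_one_of_neg₀ hq1 (by omega)
  -- norms of the factors
  have nf0p : padicNorm p ((X:ℚ) - β i0 * (Y:ℚ)) = (p:ℚ)^(-(k:ℤ)) := by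
    rw [hxy0, padicNorm.mul, hunp, hppk, one_mul]
  have nf1q : padicNorm q ((X:ℚ) - β i1 * (Y:ℚ)) = (q:ℚ)^(-(l:ℤ)) := by
    rw [hxy1, padicNorm.mul, hunq, hqql, one_mul]
  have nfp : ∀ i, i ≠ i0 → padicNorm p ((X:ℚ) - β i * (Y:ℚ)) = 1 := by
    intro i hi
    have key : (X:ℚ) - β i * (Y:ℚ) = ((u:ℚ) * (p:ℚ)^k) + ((β i0 - β i) * (Y:ℚ)) := by
      rw [← hxy0]; ring
    have n1 : padicNorm p ((u:ℚ) * (p:ℚ)^k) = (p:ℚ)^(-(k:ℤ)) := by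
      rw [padicNorm.mul, hunp, hppk, one_mul]
    have n2 : padicNorm p ((β i0 - β i) * (Y:ℚ)) = 1 := by
      rw [padicNorm.mul, hdp i0 i (fun h => hi h.symm), hYnp, one_mul]
    rw [key, padicNorm.add_eq_max_of_ne (by rw [n1, n2]; exact hpk_lt.ne), n1, n2]
    exact max_eq_right hpk_lt.le
  have nfq : ∀ i, i ≠ i1 → padicNorm q ((X:ℚ) - β i * (Y:ℚ)) = 1 := by
    intro i hi
    have key : (X:ℚ) - β i * (Y:ℚ) = ((u:ℚ) * (q:ℚ)^l) + ((β i1 - β i) * (Y:ℚ)) := by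
      rw [← hxy1]; ring
    have n1 : padicNorm q ((u:ℚ) * (q:ℚ)^l) = (q:ℚ)^(-(l:ℤ)) := by
      rw [padicNorm.mul, hunq, hqql, one_mul]
    have n2 : padicNorm q ((β i1 - β i) * (Y:ℚ)) = 1 := by
      rw [padicNorm.mul, hdq i1 i (fun h => hi h.symm), hYnq, one_mul]
    rw [key, padicNorm.add_eq_max_of_ne (by rw [n1, n2]; exact hql_lt.ne), n1, n2]
    exact max_eq_right hql_lt.le
  -- nonzero factors
  have hfne : ∀ i, (X:ℚ) - β i * (Y:ℚ) ≠ 0 := by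
    intro i
    by_cases hi : i = i0
    · subst hi
      rw [hxy0]
      exact mul_ne_zero (Int.cast_ne_zero.mpr hu0)
        (pow_ne_zero _ (by exact_mod_cast hp.pos.ne'))
    · intro h
      have h2 := nfp i hi
      rw [h, padicNorm.zero] at h2
      exact zero_ne_one h2
  -- norms of the full product at (X, Y)
  have hFp : padicNorm p ((a:ℚ) * ∏ i, ((X:ℚ) - β i * (Y:ℚ))) = (p:ℚ)^(-(k:ℤ)) := by
    rw [padicNorm.mul, hap, one_mul, padicNorm_prod]
    rw [Finset.prod_eq_single i0 (fun i _ hi => nfp i hi)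
      (fun h => absurd (Finset.mem_univ i0) h)]
    exact nf0p
  have hFq : padicNorm q ((a:ℚ) * ∏ i, ((X:ℚ) - β i * (Y:ℚ))) = (q:ℚ)^(-(l:ℤ)) := by
    rw [padicNorm.mul, haq, one_mul, padicNorm_prod]
    rw [Finset.prod_eq_single i1 (fun i _ hi => nfq i hi)
      (fun h => absurd (Finset.mem_univ i1) h)]
    exact nf1q
  -- remove the gcd
  have hg : 0 < Int.gcd X Y := Int.gcd_pos_of_ne_zero_right X hY0
  obtain ⟨g, hgdef⟩ : ∃ g : ℤ, g = (Int.gcd X Y : ℤ) := ⟨_, rfl⟩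
  obtain ⟨x', hx'⟩ : ∃ x' : ℤ, x' = X / g := ⟨_, rfl⟩
  obtain ⟨y', hy'⟩ : ∃ y' : ℤ, y' = Y / g := ⟨_, rfl⟩
  have hdX : g ∣ X := by rw [hgdef]; exact Int.gcd_dvd_left X Y
  have hdY : g ∣ Y := by rw [hgdef]; exact Int.gcd_dvd_right X Y
  have hXg : X = g * x' := by rw [hx', Int.mul_ediv_cancel' hdX]
  have hYg : Y = g * y' := by rw [hy', Int.mul_ediv_cancel' hdY]
  have hco : IsCoprime x' y' := by
    rw [Int.isCoprime_iff_gcd_eq_one, hx', hy', hgdef]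
    exact Int.gcd_div_gcd_div_gcd hg
  have hgp : ¬ (p:ℤ) ∣ g := fun h => hYp (h.trans hdY)
  have hgq : ¬ (q:ℤ) ∣ g := fun h => hYq (h.trans hdY)
  have hgnp : padicNorm p (g:ℚ) = 1 := (padicNorm.int_eq_one_iff g).mpr hgp
  have hgnq : padicNorm q (g:ℚ) = 1 := (padicNorm.int_eq_one_iff g).mpr hgq
  have hXQ : (X:ℚ) = (g:ℚ) * (x':ℚ) := by exact_mod_cast congrArg (Int.cast : ℤ → ℚ) hXg
  have hYQ : (Y:ℚ) = (g:ℚ) * (y':ℚ) := by exact_mod_cast congrArg (Int.cast : ℤ → ℚ) hYg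
  have hfact : ∀ i : Fin n, (X:ℚ) - β i * (Y:ℚ) = (g:ℚ) * ((x':ℚ) - β i * (y':ℚ)) := by
    intro i; rw [hXQ, hYQ]; ring
  -- the value of F at (x', y')
  have hcast := eval_cast_eq_aeval F ![x', y']
  have hvfun : (fun i => ((![x', y'] i : ℤ) : ℚ)) = ![(x':ℚ), (y':ℚ)] := by
    funext i; fin_cases i <;> simp
  have hmQ : ((MvPolynomial.eval ![x', y'] F : ℤ) : ℚ)
      = (a:ℚ) * ∏ i, ((x':ℚ) - β i * (y':ℚ)) := by
    rw [hcast, hvfun]; exact hsplit _ _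
  have hrel : (a:ℚ) * ∏ i, ((X:ℚ) - β i * (Y:ℚ))
      = (g:ℚ)^n * ((MvPolynomial.eval ![x', y'] F : ℤ) : ℚ) := by
    rw [hmQ, Finset.prod_congr rfl (fun i _ => hfact i), Finset.prod_mul_distrib,
      Finset.prod_const, Finset.card_univ, Fintype.card_fin]
    ring
  have hm0 : ((MvPolynomial.eval ![x', y'] F : ℤ) : ℚ) ≠ 0 := by
    rw [hmQ]
    apply mul_ne_zero
    · intro h; rw [h, padicNorm.zero] at hap; exact zero_ne_one hap
    · rw [Finset.prod_ne_zero_iff]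
      intro i _ h
      exact hfne i (by rw [hfact i, h, mul_zero])
  have hmz : MvPolynomial.eval ![x', y'] F ≠ 0 := fun h => hm0 (by rw [h]; simp)
  have hmp : padicNorm p ((MvPolynomial.eval ![x', y'] F : ℤ) : ℚ) = (p:ℚ)^(-(k:ℤ)) := by
    have h1 := hFp
    rw [hrel, padicNorm.mul, padicNorm_pow _ _ _, hgnp, one_pow, one_mul] at h1
    exact h1
  have hmq : padicNorm q ((MvPolynomial.eval ![x', y'] F : ℤ) : ℚ) = (q:ℚ)^(-(l:ℤ)) := by
    have h1 := hFq
    rw [hrel, padicNorm.mul, padicNorm_pow _ _ _, hgnq, one_pow, one_mul] at h1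
    exact h1
  have hvalp : padicValNat p (MvPolynomial.eval ![x', y'] F).natAbs = k := by
    rw [padicNorm.eq_zpow_of_nonzero hm0, padicValRat.of_int] at hmp
    have h2 := zpow_right_injective₀ (a := (p:ℚ)) (by exact_mod_cast hp.pos) hp1.ne' hmp
    have h3 : (padicValNat p (MvPolynomial.eval ![x', y'] F).natAbs : ℤ)
        = padicValInt p (MvPolynomial.eval ![x', y'] F) := rfl
    omega
  have hvalq : padicValNat q (MvPolynomial.eval ![x', y'] F).natAbs = l := by
    rw [padicNorm.eq_zpow_of_nonzero hm0, padicValRat.of_int] at hmq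
    have h2 := zpow_right_injective₀ (a := (q:ℚ)) (by exact_mod_cast hq.pos) hq1.ne' hmq
    have h3 : (padicValNat q (MvPolynomial.eval ![x', y'] F).natAbs : ℤ)
        = padicValInt q (MvPolynomial.eval ![x', y'] F) := rfl
    omega
  refine ⟨x', y', hco, hmz, ?_⟩
  unfold Spart
  rw [Finset.prod_pair hpq, Nat.factorization_def _ hp, Nat.factorization_def _ hq,
    hvalp, hvalq]
end
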